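/- arXiv:1407.7910 — 7 statements merged into one kernel-verified Lean document; each statement's English description precedes it below -/
import Mathlib

section
/- Let G be a subgroup of the group of orientation-preserving homeomorphisms of the interval I = [0,1] with the property that for every nonempty open set U ⊆ I there exists a non-identity element g_U ∈ G fixing I \ U pointwise. Let W ⊆ I be open and let f ∈ G. If f commutes with g_{W'} for every nonempty open W' ⊆ W, then f fixes W pointwise. -/
open Set

/-- The unit interval `[0,1]` as a subspace of `ℝ`. -/
abbrev I01 : Set ℝ := Set.Icc (0 : ℝ) 1

/-- The group of self-homeomorphisms of `I = [0,1]`, with multiplication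
`f * g = f ∘ g`. -/
instance : Group (I01 ≃ₜ I01) where
  mul f g := g.trans f
  one := Homeomorph.refl I01
  inv := Homeomorph.symm
  mul_assoc f g h := Homeomorph.ext fun x => rfl
  one_mul f := Homeomorph.ext fun x => rfl
  mul_one f := Homeomorph.ext fun x => rfl
  inv_mul_cancel f := Homeomorph.ext fun x => f.symm_apply_apply x

/-- Let `G` be a subgroup of `Homeo₊(I)` such that for every nonempty open
`U ⊆ I` there is a non-identity element `gU U ∈ G` fixing `I \ U` pointwise.  If `W ⊆ I`
is open, `f ∈ G`, and `f` commutes with `gU W'` for every nonempty open `W' ⊆ W`, then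
`f` fixes `W` pointwise. -/
theorem pl_not_polish_stmt0
    (G : Subgroup (I01 ≃ₜ I01))
    (hmono : ∀ g ∈ G, StrictMono ⇑(g : I01 ≃ₜ I01))
    (gU : Set I01 → (I01 ≃ₜ I01))
    (hgU : ∀ U : Set I01, IsOpen U → U.Nonempty →
      gU U ∈ G ∧ gU U ≠ 1 ∧ ∀ x ∉ U, gU U x = x)
    (W : Set I01) (hW : IsOpen W)
    (f : I01 ≃ₜ I01) (hf : f ∈ G)
    (hcomm : ∀ W' : Set I01, W' ⊆ W → IsOpen W' → W'.Nonempty →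
      f * gU W' = gU W' * f) :
    ∀ x ∈ W, f x = x := by
  intro x hx
  by_contra hfx
  have hd0 : 0 < dist (f x) x := dist_pos.mpr hfx
  set d : ℝ := dist (f x) x with hd
  set W' : Set I01 := W ∩ Metric.ball x (d/3) ∩ f ⁻¹' (Metric.ball (f x) (d/3)) with hW'
  have hopen : IsOpen W' :=
    (hW.inter Metric.isOpen_ball).inter (Metric.isOpen_ball.preimage f.continuous)
  have hxW' : x ∈ W' :=
    ⟨⟨hx, Metric.mem_ball_self (by linarith)⟩, Metric.mem_ball_self (by linarith)⟩
  have hsub : W' ⊆ W := fun y hy => hy.1.1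
  obtain ⟨hgG, hg1, hgfix⟩ := hgU W' hopen ⟨x, hxW'⟩
  have hc := hcomm W' hsub hopen ⟨x, hxW'⟩
  have hcp : ∀ y, f (gU W' y) = gU W' (f y) := by
    intro y
    have : (f * gU W') y = (gU W' * f) y := by rw [hc]
    exact this
  apply hg1
  apply Homeomorph.ext
  intro y
  by_cases hy : y ∈ W'
  · -- y is in the small ball around x, hence f.symm y ∉ W'
    have hw : f.symm y ∉ W' := by
      intro hw
      have h1 : f (f.symm y) ∈ Metric.ball (f x) (d/3) := hw.2
      rw [f.apply_symm_apply] at h1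
      have h2 : dist y x < d/3 := hy.1.2
      have h3 : dist y (f x) < d/3 := Metric.mem_ball.mp h1
      have := dist_triangle (f x) y x
      rw [dist_comm (f x) y] at this
      have : d < d/3 + d/3 := lt_of_le_of_lt this (by linarith)
      linarith
    have h4 : gU W' (f.symm y) = f.symm y := hgfix _ hw
    calc gU W' y = gU W' (f (f.symm y)) := by rw [f.apply_symm_apply]
      _ = f (gU W' (f.symm y)) := (hcp _).symm
      _ = f (f.symm y) := by rw [h4]
      _ = y := f.apply_symm_apply y
  · exact hgfix _ hy
end

section
/- Let G be a subgroup of Homeo₊(I) such that for every nonempty open U ⊆ I there is a non-identity g_U ∈ G fixing I \ U pointwise. If τ is a Hausdorff group topology on G, then for all nonempty open sets U, V ⊆ I, the set C(U,V) = {f ∈ G : f(closure U) ⊆ closure V} is closed in (G, τ). -/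
open Set

lemma homeo_mul_apply (f g : I01 ≃ₜ I01) (x : I01) : (f * g) x = f (g x) := rfl

lemma homeo_inv_eq_symm (f : I01 ≃ₜ I01) : f⁻¹ = f.symm := rfl

/-- Kallman's lemma: Let `G` be a subgroup of `Homeo₊(I)` such that for
every nonempty open `U ⊆ I` there is a non-identity element of `G` fixing `I \ U`
pointwise.  If `τ` is a Hausdorff group topology on `G`, then for all nonempty open
`U, V ⊆ I`, the set `C(U,V) = {f ∈ G : f(closure U) ⊆ closure V}` is closed in `(G, τ)`. -/
theorem pl_not_polish_stmt2
    (G : Subgroup (I01 ≃ₜ I01))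
    (hmono : ∀ g ∈ G, StrictMono ⇑(g : I01 ≃ₜ I01))
    (hflex : ∀ U : Set I01, IsOpen U → U.Nonempty →
      ∃ g ∈ G, g ≠ 1 ∧ ∀ x ∉ U, (g : I01 ≃ₜ I01) x = x)
    (τ : TopologicalSpace G)
    (hT2 : @T2Space G τ)
    (hTG : @IsTopologicalGroup G τ _)
    (U V : Set I01) (hU : IsOpen U) (hUne : U.Nonempty)
    (hV : IsOpen V) (hVne : V.Nonempty) :
    @IsClosed G τ {f : G | ⇑((f : I01 ≃ₜ I01)) '' closure U ⊆ closure V} := by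
  letI := τ
  haveI := hT2
  haveI := hTG
  have key : {f : G | ⇑((f : I01 ≃ₜ I01)) '' closure U ⊆ closure V} =
      ⋂ (g : G) (h : G) (_ : ∀ x ∉ U, (g : I01 ≃ₜ I01) x = x)
        (_ : ∀ x ∈ closure V, (h : I01 ≃ₜ I01) x = x),
        {f : G | f * g * f⁻¹ * h = h * (f * g * f⁻¹)} := by
    ext f
    simp only [mem_setOf_eq, mem_iInter]
    constructor
    · intro hf g h hg hh
      set F : I01 ≃ₜ I01 := (f : I01 ≃ₜ I01) with hF
      set Gg : I01 ≃ₜ I01 := (g : I01 ≃ₜ I01) with hGg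
      set H : I01 ≃ₜ I01 := (h : I01 ≃ₜ I01) with hH
      set A : I01 ≃ₜ I01 := F * Gg * F⁻¹ with hA
      -- the conjugate is supported in closure V
      have hAfix : ∀ x : I01, x ∉ closure V → A x = x := by
        intro x hx
        have hx' : F.symm x ∉ U := by
          intro hmem
          exact hx (hf ⟨F.symm x, subset_closure hmem, F.apply_symm_apply x⟩)
        show F (Gg (F.symm x)) = x
        rw [hg _ hx', F.apply_symm_apply]
      apply Subtype.ext
      show A * H = H * A
      apply Homeomorph.ext
      intro x
      show A (H x) = H (A x)
      by_cases hax : A x = x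
      · by_cases hhx : H x = x
        · rw [hhx, hax]; exact hhx.symm
        · have hx1 : x ∉ closure V := fun hc => hhx (hh x hc)
          have hx2 : H x ∉ closure V := fun hc => hhx (H.injective (hh _ hc))
          rw [hAfix _ hx2, hAfix _ hx1]
      · have hx1 : x ∈ closure V := by
          by_contra hc; exact hax (hAfix x hc)
        have hx2 : A x ∈ closure V := by
          by_contra hc; exact hax (A.injective (hAfix _ hc))
        rw [hh x hx1, hh _ hx2]
    · intro hcomm
      set F : I01 ≃ₜ I01 := (f : I01 ≃ₜ I01) with hFdef
      intro p hp
      by_contra hpV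
      obtain ⟨x0, hx0U, hx0⟩ := hp
      -- W₀ is the complement of closure V
      set W₀ : Set I01 := (closure V)ᶜ with hW₀def
      have hW₀ : IsOpen W₀ := isClosed_closure.isOpen_compl
      set O : Set I01 := ⇑F ⁻¹' W₀ with hOdef
      have hO : IsOpen O := hW₀.preimage F.continuous
      have hx0O : x0 ∈ O := by
        show F x0 ∈ W₀
        rw [hx0]; exact hpV
      obtain ⟨y, hyO, hyU⟩ := (_root_.mem_closure_iff.mp hx0U) O hO hx0O
      -- g is a nontrivial element supported in U' := U ∩ O
      obtain ⟨g, hgG, hg1, hgfix⟩ := hflex (U ∩ O) (hU.inter hO) ⟨y, hyU, hyO⟩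
      have hgt : ∃ t, g t ≠ t := by
        by_contra hall
        push_neg at hall
        exact hg1 (Homeomorph.ext hall)
      obtain ⟨t, hgt⟩ := hgt
      have htU' : t ∈ U ∩ O := by
        by_contra hc; exact hgt (hgfix t hc)
      set A : I01 ≃ₜ I01 := F * g * F⁻¹ with hAdef
      have haz : A (F t) ≠ F t := by
        show F (g (F.symm (F t))) ≠ F t
        rw [F.symm_apply_apply]
        exact fun hEq => hgt (F.injective hEq)
      obtain ⟨Aop, Bop, hAop, hBop, hmemA, hmemB, hAB⟩ := t2_separation haz
      set W' : Set I01 := Bop ∩ ⇑A ⁻¹' Aop ∩ W₀ with hW'def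
      have hW'open : IsOpen W' :=
        ((hBop.inter (hAop.preimage A.continuous)).inter hW₀)
      have hzW' : F t ∈ W' := ⟨⟨hmemB, hmemA⟩, htU'.2⟩
      obtain ⟨h, hhG, hh1, hhfix⟩ := hflex W' hW'open ⟨F t, hzW'⟩
      have hhw : ∃ w, h w ≠ w := by
        by_contra hall
        push_neg at hall
        exact hh1 (Homeomorph.ext hall)
      obtain ⟨w, hw⟩ := hhw
      have hwW' : w ∈ W' := by
        by_contra hc; exact hw (hhfix w hc)
      -- apply the commutation hypothesis
      have hg' : ∀ x ∉ U, ((⟨g, hgG⟩ : G) : I01 ≃ₜ I01) x = x :=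
        fun x hx => hgfix x (fun hmem => hx hmem.1)
      have hh' : ∀ x ∈ closure V, ((⟨h, hhG⟩ : G) : I01 ≃ₜ I01) x = x :=
        fun x hx => hhfix x (fun hmem => hmem.2 hx)
      have hc := hcomm ⟨g, hgG⟩ ⟨h, hhG⟩ hg' hh'
      have hc' : A (h w) = h (A w) :=
        congrArg (fun u : G => ((u : I01 ≃ₜ I01)) w) hc
      have hAw : A w ∉ W' := by
        intro hmem
        exact (Set.disjoint_left.mp hAB hwW'.1.2) hmem.1.1
      rw [hhfix _ hAw] at hc'
      exact hw (A.injective hc')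
  rw [key]
  refine isClosed_iInter fun g => isClosed_iInter fun h => isClosed_iInter fun _ =>
    isClosed_iInter fun _ => isClosed_eq ?_ ?_
  · exact ((continuous_id.mul continuous_const).mul continuous_inv).mul continuous_const
  · exact continuous_const.mul ((continuous_id.mul continuous_const).mul continuous_inv)
end

section
/- Let G be a subgroup of Homeo₊(I) such that for every nonempty open U ⊆ I there is a non-identity g_U ∈ G fixing I \ U pointwise. If τ is a Hausdorff group topology on G, then for every x ∈ I the point-evaluation map f ↦ f(x) from (G, τ) to I is continuous. -/
open Set

namespace PLaux

lemma mul_apply (f g : I01 ≃ₜ I01) (y : I01) : (f * g) y = f (g y) := rfl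

lemma apply_inv_apply (f : I01 ≃ₜ I01) (y : I01) : f (f⁻¹ y) = y := f.apply_symm_apply y

/-- If `f` fixes the complement of `A` pointwise, then `f` maps `A` into `A`. -/
lemma maps_to {f : I01 ≃ₜ I01} {A : Set I01} (hA : ∀ p ∉ A, f p = p) {p : I01}
    (hp : p ∈ A) : f p ∈ A := by
  by_contra hfp
  have h1 : f (f p) = f p := hA (f p) hfp
  have := f.injective h1
  rw [this] at hfp
  exact hfp hp

/-- Homeomorphisms with disjoint supports commute. -/
lemma commute_of_disjoint {f k : I01 ≃ₜ I01} {A B : Set I01} (hAB : Disjoint A B)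
    (hf : ∀ p ∉ A, f p = p) (hk : ∀ p ∉ B, k p = p) : ∀ p, f (k p) = k (f p) := by
  intro p
  by_cases hpA : p ∈ A
  · have hpB : p ∉ B := fun h => (hAB.ne_of_mem hpA h) rfl
    have h1 : k p = p := hk p hpB
    have h2 : f p ∈ A := maps_to hf hpA
    have h3 : k (f p) = f p := hk _ (fun h => (hAB.ne_of_mem h2 h) rfl)
    rw [h1, h3]
  · by_cases hpB : p ∈ B
    · have h1 : f p = p := hf p hpA
      have h2 : k p ∈ B := maps_to hk hpB
      have h3 : f (k p) = k p := hf _ (fun h => (hAB.ne_of_mem h h2) rfl)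
      rw [h1, h3]
    · rw [hk p hpB, hf p hpA, hk p hpB]

/-- Conjugation moves supports. -/
lemma conj_support {g : I01 ≃ₜ I01} {U : Set I01} (hg : ∀ p ∉ U, g p = p)
    (h : I01 ≃ₜ I01) : ∀ p ∉ h '' U, (h * g * h⁻¹) p = p := by
  intro p hp
  have h1 : h⁻¹ p ∉ U := fun hmem => hp ⟨h⁻¹ p, hmem, apply_inv_apply h p⟩
  show h (g (h⁻¹ p)) = p
  rw [hg _ h1, apply_inv_apply]

/-- Strictly monotone homeomorphisms of `[0,1]` fix the endpoints. -/
lemma fix_bot {g : I01 ≃ₜ I01} (hg : StrictMono ⇑g) (z : I01) (hz : (z : ℝ) = 0) :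
    g z = z := by
  have h0 : ∀ y : I01, z ≤ y := fun y => by
    rw [← Subtype.coe_le_coe, hz]; exact y.2.1
  have h1 : g z ≤ g (g⁻¹ z) := hg.monotone (h0 _)
  rw [apply_inv_apply] at h1
  exact le_antisymm h1 (h0 _)

lemma fix_top {g : I01 ≃ₜ I01} (hg : StrictMono ⇑g) (z : I01) (hz : (z : ℝ) = 1) :
    g z = z := by
  have h0 : ∀ y : I01, y ≤ z := fun y => by
    rw [← Subtype.coe_le_coe, hz]; exact y.2.2
  have h1 : g (g⁻¹ z) ≤ g z := hg.monotone (h0 _)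
  rw [apply_inv_apply] at h1
  exact le_antisymm (h0 _) h1

/-- In any nonempty open subset of `I01` there is a pair of noncommuting elements of `G`
supported there. -/
lemma exists_noncomm (G : Subgroup (I01 ≃ₜ I01))
    (hflex : ∀ U : Set I01, IsOpen U → U.Nonempty →
      ∃ g ∈ G, g ≠ 1 ∧ ∀ x ∉ U, (g : I01 ≃ₜ I01) x = x)
    (U : Set I01) (hU : IsOpen U) (hne : U.Nonempty) :
    ∃ g ∈ G, ∃ k ∈ G, (∀ p ∉ U, g p = p) ∧ (∀ p ∉ U, k p = p) ∧ g * k ≠ k * g := by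
  obtain ⟨g, hgG, hg1, hgsupp⟩ := hflex U hU hne
  obtain ⟨p, hp⟩ : ∃ p, g p ≠ p := by
    by_contra hc
    push_neg at hc
    exact hg1 (Homeomorph.ext hc)
  have hpU : p ∈ U := by
    by_contra h
    exact hp (hgsupp p h)
  obtain ⟨W2, W1, hW2o, hW1o, hgpW2, hpW1, hW12⟩ := t2_separation hp
  set V : Set I01 := U ∩ W1 ∩ g ⁻¹' W2 with hV
  have hVo : IsOpen V := ((hU.inter hW1o).inter (hW2o.preimage g.continuous))
  have hpV : p ∈ V := ⟨⟨hpU, hpW1⟩, hgpW2⟩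
  obtain ⟨k, hkG, hk1, hksupp⟩ := hflex V hVo ⟨p, hpV⟩
  refine ⟨g, hgG, k, hkG, hgsupp, fun q hq => hksupp q (fun hqV => hq hqV.1.1), ?_⟩
  intro hcomm
  apply hk1
  apply Homeomorph.ext
  intro q
  by_cases hqV : q ∈ V
  · have hgqV : g q ∉ V := fun h => (disjoint_left.mp hW12) hqV.2 h.1.2
    have h1 : g (k q) = k (g q) := congrArg (fun f : I01 ≃ₜ I01 => f q) hcomm
    rw [hksupp _ hgqV] at h1
    exact g.injective h1
  · exact hksupp q hqV

/-- Key commutation relation: if `g, k` are supported in `U` and `h` moves `U` off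
itself, then `h g h⁻¹` commutes with `k`. -/
lemma mem_comm_set {G : Subgroup (I01 ≃ₜ I01)} (g k : G) {U : Set I01}
    (hg : ∀ p ∉ U, (g : I01 ≃ₜ I01) p = p) (hk : ∀ p ∉ U, (k : I01 ≃ₜ I01) p = p)
    (h : G) (hdisj : Disjoint ((h : I01 ≃ₜ I01) '' U) U) :
    h * g * h⁻¹ * k = k * (h * g * h⁻¹) := by
  refine Subtype.ext (Homeomorph.ext fun p => ?_)
  have hconj := conj_support hg (h : I01 ≃ₜ I01)
  have := commute_of_disjoint hdisj hconj hk p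
  simpa [Subgroup.coe_mul, mul_apply] using this

end PLaux

open Filter PLaux

set_option maxHeartbeats 1000000 in
/-- Let `G` be a subgroup of `Homeo₊(I)` such that for every nonempty open
`U ⊆ I` there is a non-identity element of `G` fixing `I \ U` pointwise.  If `τ` is a
Hausdorff group topology on `G`, then for every `x ∈ I` the point-evaluation map
`f ↦ f(x)` is continuous from `(G, τ)` to `I`. -/
theorem pl_not_polish_stmt3
    (G : Subgroup (I01 ≃ₜ I01))
    (hmono : ∀ g ∈ G, StrictMono ⇑(g : I01 ≃ₜ I01))
    (hflex : ∀ U : Set I01, IsOpen U → U.Nonempty →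
      ∃ g ∈ G, g ≠ 1 ∧ ∀ x ∉ U, (g : I01 ≃ₜ I01) x = x)
    (τ : TopologicalSpace G)
    (hT2 : @T2Space G τ)
    (hTG : @IsTopologicalGroup G τ _)
    (x : I01) :
    @Continuous G I01 τ _ (fun f : G => (f : I01 ≃ₜ I01) x) := by
  letI := τ
  -- endpoint cases: evaluation is constant
  rcases eq_or_lt_of_le x.2.1 with hx0 | hx0
  · have : (fun f : G => (f : I01 ≃ₜ I01) x) = fun _ => x := by
      funext f
      exact fix_bot (hmono _ f.2) x hx0.symm
    rw [this]; exact continuous_const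
  rcases eq_or_lt_of_le x.2.2 with hx1 | hx1
  · have : (fun f : G => (f : I01 ≃ₜ I01) x) = fun _ => x := by
      funext f
      exact fix_top (hmono _ f.2) x hx1
    rw [this]; exact continuous_const
  -- main case: 0 < x < 1.  First, continuity at the identity.
  have T : Tendsto (fun h : G => (h : I01 ≃ₜ I01) x) (nhds 1) (nhds x) := by
    rw [tendsto_subtype_rng]
    refine ((nhds_basis_Ioo (x : ℝ)).tendsto_right_iff).mpr ?_
    rintro ⟨a, b⟩ ⟨hax, hxb⟩
    set a' : ℝ := max a 0 with ha'
    set b' : ℝ := min b 1 with hb'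
    have ha'x : a' < (x : ℝ) := max_lt hax hx0
    have hxb' : (x : ℝ) < b' := lt_min hxb hx1
    -- the two test intervals
    set Ua : Set I01 := {y : I01 | a' < (y : ℝ) ∧ (y : ℝ) < (x : ℝ)} with hUa
    set Ub : Set I01 := {y : I01 | (x : ℝ) < (y : ℝ) ∧ (y : ℝ) < b'} with hUb
    have hUao : IsOpen Ua := by
      have : Ua = Subtype.val ⁻¹' Ioo a' (x : ℝ) := rfl
      rw [this]; exact isOpen_Ioo.preimage continuous_subtype_val
    have hUbo : IsOpen Ub := by
      have : Ub = Subtype.val ⁻¹' Ioo (x : ℝ) b' := rfl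
      rw [this]; exact isOpen_Ioo.preimage continuous_subtype_val
    have hUane : Ua.Nonempty := by
      have hm0 : (0:ℝ) ≤ a' := le_max_right a 0
      have hm1 : (x:ℝ) ≤ 1 := x.2.2
      exact ⟨⟨(a' + (x:ℝ)) / 2, by linarith, by linarith⟩, by linarith, by linarith⟩
    have hUbne : Ub.Nonempty := by
      have hm0 : (0:ℝ) ≤ (x:ℝ) := x.2.1
      have hm1 : b' ≤ 1 := min_le_right b 1
      exact ⟨⟨((x:ℝ) + b') / 2, by linarith, by linarith⟩, by linarith, by linarith⟩
    obtain ⟨g, hgG, k, hkG, hgsupp, hksupp, hnc⟩ := exists_noncomm G hflex Ua hUao hUane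
    obtain ⟨g', hg'G, k', hk'G, hg'supp, hk'supp, hnc'⟩ := exists_noncomm G hflex Ub hUbo hUbne
    set gg : G := ⟨g, hgG⟩
    set kk : G := ⟨k, hkG⟩
    set gg' : G := ⟨g', hg'G⟩
    set kk' : G := ⟨k', hk'G⟩
    set C : Set G := {h : G | h * gg * h⁻¹ * kk = kk * (h * gg * h⁻¹)} with hC
    set D : Set G := {h : G | h * gg' * h⁻¹ * kk' = kk' * (h * gg' * h⁻¹)} with hD
    have hCc : IsClosed C := by
      apply isClosed_eq
      · exact ((continuous_id.mul continuous_const).mul continuous_inv).mul continuous_const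
      · exact continuous_const.mul ((continuous_id.mul continuous_const).mul continuous_inv)
    have hDc : IsClosed D := by
      apply isClosed_eq
      · exact ((continuous_id.mul continuous_const).mul continuous_inv).mul continuous_const
      · exact continuous_const.mul ((continuous_id.mul continuous_const).mul continuous_inv)
    have h1C : (1 : G) ∉ C := by
      intro h
      apply hnc
      have := congrArg (Subtype.val) h
      simpa using this
    have h1D : (1 : G) ∉ D := by
      intro h
      apply hnc'
      have := congrArg (Subtype.val) h
      simpa using this
    have hCsub : ∀ h : G, ((h : I01 ≃ₜ I01) x : ℝ) ≤ a → h ∈ C := by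
      intro h hha
      apply mem_comm_set gg kk hgsupp hksupp
      rw [disjoint_left]
      rintro z ⟨y, hy, rfl⟩ hz
      have hyx : y < x := Subtype.coe_lt_coe.mp hy.2
      have := (hmono _ h.2) hyx
      have hlt : ((h : I01 ≃ₜ I01) y : ℝ) < ((h : I01 ≃ₜ I01) x : ℝ) :=
        Subtype.coe_lt_coe.mpr this
      have : ((h : I01 ≃ₜ I01) y : ℝ) < a' := lt_of_lt_of_le hlt (le_trans hha (le_max_left a 0))
      exact absurd hz.1 (not_lt.mpr (le_of_lt this))
    have hDsub : ∀ h : G, b ≤ ((h : I01 ≃ₜ I01) x : ℝ) → h ∈ D := by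
      intro h hhb
      apply mem_comm_set gg' kk' hg'supp hk'supp
      rw [disjoint_left]
      rintro z ⟨y, hy, rfl⟩ hz
      have hyx : x < y := Subtype.coe_lt_coe.mp hy.1
      have := (hmono _ h.2) hyx
      have hlt : ((h : I01 ≃ₜ I01) x : ℝ) < ((h : I01 ≃ₜ I01) y : ℝ) :=
        Subtype.coe_lt_coe.mpr this
      have : b' < ((h : I01 ≃ₜ I01) y : ℝ) :=
        lt_of_le_of_lt (le_trans (min_le_left b 1) hhb) hlt
      exact absurd hz.2 (not_lt.mpr (le_of_lt this))
    have hW : (Cᶜ ∩ Dᶜ) ∈ nhds (1 : G) :=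
      (hCc.isOpen_compl.inter hDc.isOpen_compl).mem_nhds ⟨h1C, h1D⟩
    filter_upwards [hW] with h hh
    constructor
    · by_contra hcon
      exact hh.1 (hCsub h (not_lt.mp hcon))
    · by_contra hcon
      exact hh.2 (hDsub h (not_lt.mp hcon))
  -- now translate continuity at 1 to continuity everywhere
  rw [continuous_iff_continuousAt]
  intro f
  have h1 : Tendsto (fun h : G => f⁻¹ * h) (nhds f) (nhds 1) := by
    have := (continuous_mul_left f⁻¹ : Continuous fun h : G => f⁻¹ * h).tendsto f
    simpa only [inv_mul_cancel] using this
  have h2 := T.comp h1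
  have h3 := ((f : I01 ≃ₜ I01).continuous.continuousAt (x := x)).tendsto.comp h2
  have heq : (fun h : G => (f : I01 ≃ₜ I01) (((f⁻¹ * h : G) : I01 ≃ₜ I01) x)) =
      fun h : G => (h : I01 ≃ₜ I01) x := by
    funext h
    have : ((f⁻¹ * h : G) : I01 ≃ₜ I01) = (f : I01 ≃ₜ I01)⁻¹ * (h : I01 ≃ₜ I01) := rfl
    rw [this, mul_apply, apply_inv_apply]
  have h3' : Tendsto (fun h : G => (f : I01 ≃ₜ I01) (((f⁻¹ * h : G) : I01 ≃ₜ I01) x))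
      (nhds f) (nhds ((f : I01 ≃ₜ I01) x)) := h3
  show Tendsto (fun h : G => (h : I01 ≃ₜ I01) x) (nhds f) (nhds ((f : I01 ≃ₜ I01) x))
  exact h3'.congr fun h => congrFun heq h
end

section
/- Let G be a topological group whose point-evaluations on I are continuous: that is, G is a subgroup of Homeo₊(I) equipped with a group topology τ such that for each x ∈ I the map g ↦ g(x) is continuous from (G,τ) to I. Then τ contains (is finer than) the compact-open topology on G. -/
open Set

/-- Arens: Let `G` be a subgroup of `Homeo₊(I)` equipped with a group
topology `τ` such that every point-evaluation `g ↦ g(x)` is continuous.  Then `τ` is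
finer than (i.e. contains) the compact-open topology on `G`. -/
theorem pl_not_polish_stmt4
    (G : Subgroup (I01 ≃ₜ I01))
    (hmono : ∀ g ∈ G, StrictMono ⇑(g : I01 ≃ₜ I01))
    (τ : TopologicalSpace G)
    (hTG : @IsTopologicalGroup G τ _)
    (heval : ∀ x : I01, @Continuous G I01 τ _ (fun g : G => (g : I01 ≃ₜ I01) x)) :
    τ ≤ TopologicalSpace.induced
      (fun g : G => ContinuousMap.mk _ (g : I01 ≃ₜ I01).continuous)
      ContinuousMap.compactOpen := by
  letI := τ
  rw [← continuous_iff_le_induced, continuous_iff_continuousAt]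
  intro g₀
  unfold ContinuousAt
  rw [ContinuousMap.tendsto_iff_tendstoUniformly, Metric.tendstoUniformly_iff]
  intro ε hε
  obtain ⟨δ, hδ, hδ'⟩ := Metric.uniformContinuous_iff.mp
    (CompactSpace.uniformContinuous_of_continuous (g₀ : I01 ≃ₜ I01).continuous)
    (ε/3) (by linarith)
  obtain ⟨n, hn⟩ := exists_nat_gt (1/δ)
  have hn0 : 0 < n := by
    rcases Nat.eq_zero_or_pos n with h | h
    · subst h
      norm_num at hn
      linarith
    · exact h
  have hne : (0:ℝ) < (n:ℝ) := by exact_mod_cast hn0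
  have h1n : 1/(n:ℝ) < δ := by
    rw [div_lt_iff₀ hne]
    have := (div_lt_iff₀ hδ).mp hn
    nlinarith
  set p : ℕ → I01 := fun j => ⟨min ((j:ℝ)/n) 1,
    ⟨le_min (by positivity) zero_le_one, min_le_right _ _⟩⟩ with hp
  have hpval : ∀ j : ℕ, j ≤ n → ((p j : I01) : ℝ) = (j:ℝ)/n := by
    intro j hjn
    simp only [hp]
    exact min_eq_left (by
      rw [div_le_one hne]
      exact_mod_cast hjn)
  have hev : ∀ᶠ g : G in nhds g₀, ∀ j : Fin (n+1),
      dist ((g : I01 ≃ₜ I01) (p j)) ((g₀ : I01 ≃ₜ I01) (p j)) < ε/3 := by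
    rw [Filter.eventually_all]
    intro j
    have ht := (heval (p j)).tendsto g₀
    filter_upwards [ht (Metric.ball_mem_nhds _ (by linarith : (0:ℝ) < ε/3))] with g hg
    exact Metric.mem_ball.mp hg
  filter_upwards [hev] with g hg
  intro x
  set j : ℕ := min (⌊(n:ℝ) * x⌋₊) (n-1) with hj
  have hjn : j ≤ n - 1 := min_le_right _ _
  have hj1n : j + 1 ≤ n := by omega
  have hxl : ((p j : I01) : ℝ) ≤ (x : ℝ) := by
    rw [hpval j (by omega)]
    rw [div_le_iff₀ hne]
    have h1 : (j:ℝ) ≤ (⌊(n:ℝ) * x⌋₊ : ℝ) := by exact_mod_cast min_le_left _ _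
    have h2 : (⌊(n:ℝ) * x⌋₊ : ℝ) ≤ (n:ℝ) * x := Nat.floor_le (mul_nonneg hne.le x.2.1)
    calc (j:ℝ) ≤ (n:ℝ) * x := le_trans h1 h2
      _ = (x:ℝ) * n := mul_comm _ _
  have hxr : (x : ℝ) ≤ ((p (j+1) : I01) : ℝ) := by
    rw [hpval (j+1) hj1n]
    by_cases h : ⌊(n:ℝ) * x⌋₊ ≤ n - 1
    · have hje : j = ⌊(n:ℝ) * x⌋₊ := min_eq_left h
      rw [le_div_iff₀ hne]
      have h2 : (n:ℝ) * x < (⌊(n:ℝ) * x⌋₊ : ℝ) + 1 := Nat.lt_floor_add_one _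
      rw [hje]
      push_cast
      linarith [mul_comm (n:ℝ) (x:ℝ)]
    · push_neg at h
      have hje : j = n - 1 := min_eq_right (by omega)
      have : ((j:ℝ) + 1) = (n:ℝ) := by
        rw [hje]
        have : ((n - 1 : ℕ) : ℝ) = (n:ℝ) - 1 := by
          rw [Nat.cast_sub hn0]
          simp
        rw [this]; ring
      push_cast
      rw [this, div_self hne.ne']
      exact x.2.2
  have hgap : dist ((g₀ : I01 ≃ₜ I01) (p j)) ((g₀ : I01 ≃ₜ I01) (p (j+1))) < ε/3 := by
    apply hδ'
    rw [Subtype.dist_eq, Real.dist_eq, hpval j (by omega), hpval (j+1) hj1n]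
    have : (j:ℝ)/n - ((j:ℝ)+1)/n = -(1/n) := by ring
    push_cast
    rw [this, abs_neg, abs_of_pos (by positivity)]
    exact h1n
  have hcj : dist ((g : I01 ≃ₜ I01) (p j)) ((g₀ : I01 ≃ₜ I01) (p j)) < ε/3 := by
    have := hg ⟨j, by omega⟩
    simpa using this
  have hcj1 : dist ((g : I01 ≃ₜ I01) (p (j+1))) ((g₀ : I01 ≃ₜ I01) (p (j+1))) < ε/3 := by
    have := hg ⟨j+1, by omega⟩
    simpa using this
  have hm : Monotone ⇑(g : I01 ≃ₜ I01) := (hmono _ g.2).monotone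
  have hm0 : Monotone ⇑(g₀ : I01 ≃ₜ I01) := (hmono _ g₀.2).monotone
  have hle1 : p j ≤ x := Subtype.coe_le_coe.mp hxl
  have hle2 : x ≤ p (j+1) := Subtype.coe_le_coe.mp hxr
  have a1 : (((g : I01 ≃ₜ I01) (p j) : I01) : ℝ) ≤ ((g : I01 ≃ₜ I01) x : ℝ) :=
    Subtype.coe_le_coe.mpr (hm hle1)
  have a2 : (((g : I01 ≃ₜ I01) x : I01) : ℝ) ≤ ((g : I01 ≃ₜ I01) (p (j+1)) : ℝ) :=
    Subtype.coe_le_coe.mpr (hm hle2)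
  have b1 : (((g₀ : I01 ≃ₜ I01) (p j) : I01) : ℝ) ≤ ((g₀ : I01 ≃ₜ I01) x : ℝ) :=
    Subtype.coe_le_coe.mpr (hm0 hle1)
  have b2 : (((g₀ : I01 ≃ₜ I01) x : I01) : ℝ) ≤ ((g₀ : I01 ≃ₜ I01) (p (j+1)) : ℝ) :=
    Subtype.coe_le_coe.mpr (hm0 hle2)
  simp only [ContinuousMap.coe_mk]
  rw [Subtype.dist_eq, Real.dist_eq] at hgap hcj hcj1 ⊢
  rw [abs_sub_lt_iff] at hgap hcj hcj1
  rw [abs_sub_lt_iff]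
  constructor <;> linarith
end

section
/- Let G be a group with a σ-algebra Σ making (G, Σ) a standard Borel group. Suppose there is a sequence (B_n) of subsets of G such that: (1) G = ⋃_n B_n; (2) each B_n is symmetric (B_n⁻¹ = B_n) and lies in Σ; (3) for each n there is m_n with B_n·B_n ⊆ B_{m_n}; (4) for each n and every sequence (g_k) of elements of G, there is f ∈ G with f ∉ ⋃_k B_n·g_k. Then there is no Polish group topology on G whose Borel σ-algebra equals Σ. -/
open Set Pointwise Topology

/-- If two sets are residual-equal and one is meagre, so is the other. -/
lemma isMeagre_congr' {X : Type*} [TopologicalSpace X] {s t : Set X}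
    (h : s =ᵇ t) (hs : IsMeagre s) : IsMeagre t := by
  rw [IsMeagre] at hs ⊢
  have h' : {x | (x ∈ s) = (x ∈ t)} ∈ residual X := h
  filter_upwards [hs, h'] with x hx1 hx2
  simp only [mem_compl_iff] at hx1 ⊢
  simp only [eq_iff_iff] at hx2
  exact fun hxt => hx1 (hx2.mpr hxt)

/-- A nonempty open set in a Baire space is not meagre. -/
lemma not_isMeagre_of_isOpen' {X : Type*} [TopologicalSpace X] [BaireSpace X]
    {U : Set X} (hU : IsOpen U) (hne : U.Nonempty) : ¬ IsMeagre U := by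
  intro h
  have hd : Dense Uᶜ := dense_of_mem_residual h
  obtain ⟨x, hx⟩ := hne
  obtain ⟨y, hyU, hyC⟩ := hd.inter_open_nonempty U hU ⟨x, hx⟩
  exact hyC hyU

/-- Pettis's theorem: if `A` is Baire measurable and non-meagre in a topological group
which is a Baire space, then `A * A⁻¹` contains an open neighbourhood of `1`. -/
lemma pettis' {G : Type*} [Group G] [TopologicalSpace G] [IsTopologicalGroup G] [BaireSpace G]
    {A : Set G} (hA : BaireMeasurableSet A) (hnm : ¬ IsMeagre A) :
    ∃ V : Set G, IsOpen V ∧ (1 : G) ∈ V ∧ V ⊆ A * A⁻¹ := by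
  obtain ⟨U, Uopen, hAU⟩ := hA.residualEq_isOpen
  have hUne : U.Nonempty := by
    rcases U.eq_empty_or_nonempty with h | h
    · exact absurd (isMeagre_congr' (h ▸ hAU).symm IsMeagre.empty) hnm
    · exact h
  refine ⟨U * U⁻¹, Uopen.mul_right, ?_, ?_⟩
  · obtain ⟨u, hu⟩ := hUne
    exact ⟨u, hu, u⁻¹, Set.inv_mem_inv.mpr hu, mul_inv_cancel u⟩
  · rintro g ⟨u, hu, v, hv, rfl⟩
    rw [Set.mem_inv] at hv
    -- `u ∈ U ∩ (u*v) • U` since `(u*v)⁻¹ * u = v⁻¹ * u⁻¹ * u = v⁻¹ ∈ U`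
    set g := u * v with hg
    have e : Filter.Tendsto (fun x => g⁻¹ * x) (residual G) (residual G) :=
      tendsto_residual_of_isOpenMap (continuous_mul_left g⁻¹)
        (Homeomorph.mulLeft g⁻¹).isOpenMap
    have hAU2 : ((fun x => g⁻¹ * x) ⁻¹' A) =ᵇ ((fun x => g⁻¹ * x) ⁻¹' U) :=
      hAU.comp_tendsto e
    have hint : ((A ∩ (fun x => g⁻¹ * x) ⁻¹' A : Set G)) =ᵇ ((U ∩ (fun x => g⁻¹ * x) ⁻¹' U : Set G)) := by
      have h1 : {x | (x ∈ A) = (x ∈ U)} ∈ residual G := hAU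
      have h2 : {x | (g⁻¹ * x ∈ A) = (g⁻¹ * x ∈ U)} ∈ residual G := hAU2
      filter_upwards [h1, h2] with x hx1 hx2
      simp only [eq_iff_iff] at hx1 hx2
      show (x ∈ A ∩ (fun x => g⁻¹ * x) ⁻¹' A) = (x ∈ U ∩ (fun x => g⁻¹ * x) ⁻¹' U)
      simp only [Set.mem_inter_iff, Set.mem_preimage, eq_iff_iff]
      exact and_congr hx1 hx2
    have hQopen : IsOpen (U ∩ (fun x => g⁻¹ * x) ⁻¹' U) :=
      Uopen.inter (Uopen.preimage (continuous_mul_left g⁻¹))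
    have hQne : (U ∩ (fun x => g⁻¹ * x) ⁻¹' U).Nonempty := by
      refine ⟨u, hu, ?_⟩
      simp only [Set.mem_preimage, hg, mul_inv_rev, mul_assoc]
      simpa [mul_assoc] using hv
    have hANe : (A ∩ (fun x => g⁻¹ * x) ⁻¹' A).Nonempty := by
      rcases (A ∩ (fun x => g⁻¹ * x) ⁻¹' A).eq_empty_or_nonempty with h | h
      · exact absurd (isMeagre_congr' (h ▸ hint) IsMeagre.empty)
          (not_isMeagre_of_isOpen' hQopen hQne)
      · exact h
    obtain ⟨a, haA, haA'⟩ := hANe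
    refine ⟨a, haA, (g⁻¹ * a)⁻¹, Set.inv_mem_inv.mpr haA', ?_⟩
    group
    exact hg

/-- Let `(G, Σ)` be a standard Borel group.  Suppose there is a sequence
`(B n)` of subsets of `G` such that (1) `G = ⋃ n, B n`; (2) each `B n` is symmetric and
Borel; (3) for each `n` there is `m` with `B n * B n ⊆ B m`; (4) for each `n` and every
sequence `(g k)` in `G` there is `f ∈ G` with `f ∉ ⋃ k, B n * {g k}`.  Then there is no
Polish group topology on `G` whose Borel σ-algebra equals `Σ`. -/
theorem pl_not_polish_stmt5
    {G : Type*} [Group G] [m : MeasurableSpace G] [StandardBorelSpace G]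
    (hmul : Measurable fun p : G × G => p.1 * p.2)
    (hinv : Measurable fun g : G => g⁻¹)
    (B : ℕ → Set G)
    (hcover : (⋃ n, B n) = Set.univ)
    (hsymm : ∀ n, (B n)⁻¹ = B n)
    (hBorel : ∀ n, MeasurableSet (B n))
    (hsq : ∀ n, ∃ mn, B n * B n ⊆ B mn)
    (havoid : ∀ n, ∀ g : ℕ → G, ∃ f : G, f ∉ ⋃ k, B n * {g k}) :
    ¬ ∃ τ : TopologicalSpace G,
        @IsTopologicalGroup G τ _ ∧ @PolishSpace G τ ∧ @borel G τ = m := by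
  rintro ⟨τ, htg, hpol, hborel⟩
  letI := τ
  haveI := htg
  haveI := hpol
  haveI : BorelSpace G := ⟨hborel.symm⟩
  haveI : BaireSpace G := by
    letI := TopologicalSpace.upgradeIsCompletelyMetrizable G
    infer_instance
  -- Some `B n` is non-meagre by Baire category
  have hex : ∃ n, ¬ IsMeagre (B n) := by
    by_contra h
    push_neg at h
    have : IsMeagre (⋃ n, B n) := isMeagre_iUnion h
    rw [hcover] at this
    exact not_isMeagre_of_isOpen' isOpen_univ ⟨1, trivial⟩ this
  obtain ⟨n, hn⟩ := hex
  have hBM : BaireMeasurableSet (B n) := (hBorel n).baireMeasurableSet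
  obtain ⟨V, Vopen, hV1, hVsub⟩ := pettis' hBM hn
  obtain ⟨mn, hmn⟩ := hsq n
  have hVB : V ⊆ B mn := by
    have heq : B n * (B n)⁻¹ = B n * B n := by rw [hsymm]
    intro x hx
    exact hmn (heq ▸ hVsub hx)
  -- The right translates of `V` cover `G`; by second countability, countably many suffice
  have hcov : (⋃ g : G, V * ({g} : Set G)) = Set.univ := by
    ext x
    simp only [Set.mem_iUnion, Set.mem_univ, iff_true]
    exact ⟨x, 1, hV1, x, rfl, one_mul x⟩
  obtain ⟨T, hTc, hTU⟩ := TopologicalSpace.isOpen_iUnion_countable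
    (fun g : G => V * ({g} : Set G)) (fun g => Vopen.mul_right)
  rw [hcov] at hTU
  have hTne : T.Nonempty := by
    rcases T.eq_empty_or_nonempty with h | h
    · rw [h] at hTU
      simp only [Set.mem_empty_iff_false, Set.iUnion_of_empty, Set.iUnion_empty] at hTU
      exact absurd (hTU ▸ Set.mem_univ (1 : G)) (by simp [← hTU])
    · exact h
  obtain ⟨gk, hgk⟩ := hTc.exists_eq_range hTne
  obtain ⟨f, hf⟩ := havoid mn gk
  apply hf
  have hfU : f ∈ ⋃ g ∈ T, V * ({g} : Set G) := hTU ▸ Set.mem_univ f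
  simp only [Set.mem_iUnion] at hfU ⊢
  obtain ⟨g, hgT, hfg⟩ := hfU
  rw [hgk] at hgT
  obtain ⟨k, rfl⟩ := hgT
  exact ⟨k, Set.mul_subset_mul_right hVB hfg⟩
end

section
/- Fix y₀ ∈ (0,1) and n ≥ 1. Under the identification of the set A_n of increasing piecewise-linear homeomorphisms of I with exactly n break points with the open set X_n ⊆ ((0,1)×(0,1))ⁿ (via the ordered tuple of break point coordinates (x_i, f(x_i))), the set {f ∈ A_n : ∃ x₀ ∈ B(f), f(x₀) = y₀} corresponds to a nowhere dense subset of X_n. -/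
open Set

/-- The tuple `(z₁,…,z_n)` extended by the conventions `z₀ = (0,0)`, `z_{n+1} = (1,1)`
(and `(1,1)` beyond). -/
def extTuple (n : ℕ) (v : Fin n → ℝ × ℝ) : ℕ → ℝ × ℝ := fun j =>
  if h : 1 ≤ j ∧ j ≤ n then v ⟨j - 1, by omega⟩ else if j = 0 then (0, 0) else (1, 1)

/-- The tuple `(z₁,…,z_n) ∈ ((0,1)×(0,1))ⁿ` defines a piecewise linear map: writing
`z_i = (x_i, y_i)` and `z₀ = (0,0)`, `z_{n+1} = (1,1)`, we require each `z_i ∈ Z`,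
`x_i < x_{i+1}` and `y_i < y_{i+1}` for `1 ≤ i ≤ n`, and no three consecutive points
`z_{i-1}, z_i, z_{i+1}` (for `1 ≤ i ≤ n`) collinear. -/
def DefinesPL (n : ℕ) (v : Fin n → ℝ × ℝ) : Prop :=
  (∀ i, (v i).1 ∈ Set.Ioo (0 : ℝ) 1 ∧ (v i).2 ∈ Set.Ioo (0 : ℝ) 1) ∧
  (∀ j, 1 ≤ j → j ≤ n →
    (extTuple n v j).1 < (extTuple n v (j + 1)).1 ∧
    (extTuple n v j).2 < (extTuple n v (j + 1)).2) ∧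
  (∀ j, 1 ≤ j → j ≤ n →
    ((extTuple n v (j + 1)).2 - (extTuple n v j).2) *
        ((extTuple n v j).1 - (extTuple n v (j - 1)).1) ≠
      ((extTuple n v j).2 - (extTuple n v (j - 1)).2) *
        ((extTuple n v (j + 1)).1 - (extTuple n v j).1))

/-- The parameter space `X_n` of tuples defining piecewise linear maps. -/
def Xn (n : ℕ) : Set (Fin n → ℝ × ℝ) := {v | DefinesPL n v}

lemma continuous_extTuple (n : ℕ) (j : ℕ) :
    Continuous (fun v : Fin n → ℝ × ℝ => extTuple n v j) := by
  unfold extTuple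
  by_cases h : 1 ≤ j ∧ j ≤ n
  · simp only [dif_pos h]; exact continuous_apply _
  · simp only [dif_neg h]; exact continuous_const

lemma isOpen_Xn (n : ℕ) : IsOpen (Xn n) := by
  have hXn : Xn n =
      (⋂ i : Fin n, {v : Fin n → ℝ × ℝ | (v i).1 ∈ Set.Ioo (0:ℝ) 1 ∧ (v i).2 ∈ Set.Ioo (0:ℝ) 1}) ∩
      ((⋂ j ∈ Finset.Icc 1 n, ({v : Fin n → ℝ × ℝ |
          (extTuple n v j).1 < (extTuple n v (j + 1)).1} ∩
        {v : Fin n → ℝ × ℝ | (extTuple n v j).2 < (extTuple n v (j + 1)).2})) ∩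
      (⋂ j ∈ Finset.Icc 1 n, {v : Fin n → ℝ × ℝ |
        ((extTuple n v (j + 1)).2 - (extTuple n v j).2) *
            ((extTuple n v j).1 - (extTuple n v (j - 1)).1) ≠
          ((extTuple n v j).2 - (extTuple n v (j - 1)).2) *
            ((extTuple n v (j + 1)).1 - (extTuple n v j).1)})) := by
    ext v
    simp only [Xn, DefinesPL, Set.mem_setOf_eq, Set.mem_inter_iff, Set.mem_iInter,
      Finset.mem_Icc, and_imp]
  rw [hXn]
  have hcf : ∀ j, Continuous fun v : Fin n → ℝ × ℝ => (extTuple n v j).1 :=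
    fun j => (continuous_fst.comp (continuous_extTuple n j))
  have hcs : ∀ j, Continuous fun v : Fin n → ℝ × ℝ => (extTuple n v j).2 :=
    fun j => (continuous_snd.comp (continuous_extTuple n j))
  refine IsOpen.inter ?_ (IsOpen.inter ?_ ?_)
  · refine isOpen_iInter_of_finite fun i => ?_
    have h1 : Continuous fun v : Fin n → ℝ × ℝ => (v i).1 :=
      continuous_fst.comp (continuous_apply i)
    have h2 : Continuous fun v : Fin n → ℝ × ℝ => (v i).2 :=
      continuous_snd.comp (continuous_apply i)
    exact ((isOpen_Ioo.preimage h1).inter (isOpen_Ioo.preimage h2))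
  · refine isOpen_biInter_finset fun j _ => ?_
    exact (isOpen_lt (hcf j) (hcf (j+1))).inter (isOpen_lt (hcs j) (hcs (j+1)))
  · refine isOpen_biInter_finset fun j _ => ?_
    exact isOpen_ne_fun (by fun_prop) (by fun_prop)

/-- Fix `y₀ ∈ (0,1)` and `n ≥ 1`.  Under the identification of `A_n` (the
increasing piecewise-linear homeomorphisms of `I` with exactly `n` break points) with
`X_n` via break-point tuples `(x_i, f(x_i))`, the set `{f ∈ A_n : ∃ x₀ ∈ B(f), f(x₀) = y₀}`
corresponds to the set of tuples with some `y`-coordinate equal to `y₀`, which is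
nowhere dense in `X_n`. -/
theorem pl_not_polish_stmt12 (n : ℕ) (hn : 1 ≤ n) (y₀ : ℝ) (hy₀ : y₀ ∈ Set.Ioo (0 : ℝ) 1) :
    IsNowhereDense {v : Xn n | ∃ i, ((v : Fin n → ℝ × ℝ) i).2 = y₀} := by
  have hclosed : IsClosed {v : Xn n | ∃ i, ((v : Fin n → ℝ × ℝ) i).2 = y₀} := by
    have : {v : Xn n | ∃ i, ((v : Fin n → ℝ × ℝ) i).2 = y₀} =
        ⋃ i : Fin n, {v : Xn n | ((v : Fin n → ℝ × ℝ) i).2 = y₀} := by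
      ext v; simp
    rw [this]
    refine isClosed_iUnion_of_finite fun i => ?_
    have hc : Continuous fun v : Xn n => ((v : Fin n → ℝ × ℝ) i).2 :=
      continuous_snd.comp ((continuous_apply i).comp continuous_subtype_val)
    exact isClosed_singleton.preimage hc
  rw [hclosed.isNowhereDense_iff]
  rw [Set.eq_empty_iff_forall_notMem]
  intro v hv
  rw [mem_interior_iff_mem_nhds, Metric.mem_nhds_iff] at hv
  obtain ⟨ε, hε, hball⟩ := hv
  obtain ⟨ε', hε', hball'⟩ := Metric.isOpen_iff.mp (isOpen_Xn n) v.1 v.2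
  -- choose δ
  set F : Finset ℝ := insert 0 ((Finset.univ : Finset (Fin n)).image
      (fun i => y₀ - ((v : Fin n → ℝ × ℝ) i).2)) with hF
  have hinf : (Set.Ioo (0:ℝ) (min ε ε')).Infinite :=
    Set.Ioo_infinite (by positivity)
  obtain ⟨δ, hδmem, hδF⟩ := hinf.exists_notMem_finset F
  obtain ⟨hδpos, hδlt⟩ := hδmem
  have hδne : ∀ i : Fin n, ((v : Fin n → ℝ × ℝ) i).2 + δ ≠ y₀ := by
    intro i h
    apply hδF
    rw [hF]
    refine Finset.mem_insert_of_mem ?_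
    refine Finset.mem_image.mpr ⟨i, Finset.mem_univ i, ?_⟩
    linarith
  set w : Fin n → ℝ × ℝ := fun i => (((v : Fin n → ℝ × ℝ) i).1, ((v : Fin n → ℝ × ℝ) i).2 + δ)
    with hw
  have hdist : dist w (v : Fin n → ℝ × ℝ) < min ε ε' := by
    rw [dist_pi_lt_iff (by positivity)]
    intro i
    rw [Prod.dist_eq]
    simp only [hw]
    rw [Real.dist_eq, Real.dist_eq]
    simp only [sub_self, abs_zero, add_sub_cancel_left]
    rw [max_lt_iff]
    constructor
    · positivity
    · rw [abs_of_pos hδpos]; exact hδlt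
  have hwXn : w ∈ Xn n := hball' (by
    rw [Metric.mem_ball]; exact lt_of_lt_of_le hdist (min_le_right _ _))
  have hwball : (⟨w, hwXn⟩ : Xn n) ∈ Metric.ball v ε := by
    rw [Metric.mem_ball, Subtype.dist_eq]
    exact lt_of_lt_of_le hdist (min_le_left _ _)
  obtain ⟨i, hi⟩ := hball hwball
  exact hδne i hi
end

section
/- Fix n, m, k ∈ ℕ with k > m, and f ∈ PL₊(I) with exactly n break points. In the Polish topology τ₀ on PL₊(I), the set f·A_m ∩ A_k is meager in A_k. -/
open Set

noncomputable section
open scoped Classical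

/-- The right-hand derivative of `f` at `x`. -/
def rightDeriv (f : ℝ → ℝ) (x : ℝ) : ℝ := derivWithin f (Set.Ioi x) x

/-- The left-hand derivative of `f` at `x`. -/
def leftDeriv (f : ℝ → ℝ) (x : ℝ) : ℝ := derivWithin f (Set.Iio x) x

/-- The slope ratio `f*(x) = f'₊(x) / f'₋(x)` of `f` at `x`. -/
def slopeRatio (f : ℝ → ℝ) (x : ℝ) : ℝ := rightDeriv f x / leftDeriv f x

/-- The set of break points of `f`: points of `(0,1)` where the slope ratio is not `1`. -/
def breakPts (f : ℝ → ℝ) : Set ℝ := {x ∈ Set.Ioo (0 : ℝ) 1 | slopeRatio f x ≠ 1}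

/-- `f : ℝ → ℝ` restricts to an increasing piecewise-linear self-homeomorphism of
`I = [0,1]` with finitely many changes of slope. -/
def IsPLHomeo (f : ℝ → ℝ) : Prop :=
  f 0 = 0 ∧ f 1 = 1 ∧ StrictMonoOn f (Set.Icc 0 1) ∧ ContinuousOn f (Set.Icc 0 1) ∧
    Set.MapsTo f (Set.Icc 0 1) (Set.Icc 0 1) ∧ Set.SurjOn f (Set.Icc 0 1) (Set.Icc 0 1) ∧
    ∃ S : Finset ℝ, ∀ x ∈ Set.Icc (0 : ℝ) 1 \ (S : Set ℝ), ∃ a b : ℝ,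
      ∀ᶠ y in nhdsWithin x (Set.Icc (0 : ℝ) 1), f y = a * y + b

/-- The set `A_m ⊆ PL₊(I)` of maps with exactly `m` break points, as a type. -/
def An (m : ℕ) : Type := {f : ℝ → ℝ // IsPLHomeo f ∧ (breakPts f).ncard = m}

/-- The tuple `Φ_m(f) = ((x₁, f x₁), …, (x_m, f x_m))` of break points of `f` listed in
increasing order. -/
def breakTuple (m : ℕ) (f : ℝ → ℝ) : Fin m → ℝ × ℝ := fun i =>
  if h : (breakPts f).Finite then
    let l := h.toFinset.sort (· ≤ ·)
    if h2 : (i : ℕ) < l.length then (l.get ⟨i, h2⟩, f (l.get ⟨i, h2⟩)) else (0, 0)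
  else (0, 0)

/-- The Polish topology `τ₀` on `A_m`, transported from the parameter space
`X_m ⊆ ((0,1)×(0,1))ᵐ` of break-point tuples via `Φ_m`. -/
instance (m : ℕ) : TopologicalSpace (An m) :=
  TopologicalSpace.induced (fun f : An m => breakTuple m f.1) inferInstance

end

section Aux
open Filter Topology

/-- transfer of right derivative along a locally affine post-composition -/
lemma aux_rightDeriv_comp_affine {ψ h : ℝ → ℝ} {x a b : ℝ} (ha : a ≠ 0)
    (hev : ∀ᶠ y in 𝓝[>] x, ψ (h y) = a * h y + b)
    (hx : ψ (h x) = a * h x + b) :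
    rightDeriv (ψ ∘ h) x = a * rightDeriv h x := by
  have h1 : derivWithin (ψ ∘ h) (Ioi x) x = derivWithin (fun y => a * h y + b) (Ioi x) x :=
    Filter.EventuallyEq.derivWithin_eq (by filter_upwards [hev] with y hy; exact hy) hx
  rw [rightDeriv, h1, rightDeriv]
  by_cases hd : DifferentiableWithinAt ℝ h (Ioi x) x
  · exact ((hd.hasDerivWithinAt.const_mul a).add_const b).derivWithin (uniqueDiffWithinAt_Ioi x)
  · rw [derivWithin_zero_of_not_differentiableWithinAt hd, mul_zero,
      derivWithin_zero_of_not_differentiableWithinAt]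
    intro hdd
    exact hd <| (((hdd.sub_const b).const_mul a⁻¹).congr
      (fun y _ => by field_simp; ring) (by field_simp; ring))

lemma aux_leftDeriv_comp_affine {ψ h : ℝ → ℝ} {x a b : ℝ} (ha : a ≠ 0)
    (hev : ∀ᶠ y in 𝓝[<] x, ψ (h y) = a * h y + b)
    (hx : ψ (h x) = a * h x + b) :
    leftDeriv (ψ ∘ h) x = a * leftDeriv h x := by
  have h1 : derivWithin (ψ ∘ h) (Iio x) x = derivWithin (fun y => a * h y + b) (Iio x) x :=
    Filter.EventuallyEq.derivWithin_eq (by filter_upwards [hev] with y hy; exact hy) hx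
  rw [leftDeriv, h1, leftDeriv]
  by_cases hd : DifferentiableWithinAt ℝ h (Iio x) x
  · exact ((hd.hasDerivWithinAt.const_mul a).add_const b).derivWithin (uniqueDiffWithinAt_Iio x)
  · rw [derivWithin_zero_of_not_differentiableWithinAt hd, mul_zero,
      derivWithin_zero_of_not_differentiableWithinAt]
    intro hdd
    exact hd <| (((hdd.sub_const b).const_mul a⁻¹).congr
      (fun y _ => by field_simp; ring) (by field_simp; ring))

lemma aux_rightDeriv_affine (a b x : ℝ) : rightDeriv (fun y => a * y + b) x = a := by
  have : HasDerivWithinAt (fun y => a * y + b) a (Ioi x) x := by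
    simpa using (((hasDerivAt_id x).const_mul a).add_const b).hasDerivWithinAt
  exact this.derivWithin (uniqueDiffWithinAt_Ioi x)

lemma aux_leftDeriv_affine (a b x : ℝ) : leftDeriv (fun y => a * y + b) x = a := by
  have : HasDerivWithinAt (fun y => a * y + b) a (Iio x) x := by
    simpa using (((hasDerivAt_id x).const_mul a).add_const b).hasDerivWithinAt
  exact this.derivWithin (uniqueDiffWithinAt_Iio x)

/-- locally affine (two-sidedly) increasing maps have slope ratio 1 -/
lemma aux_ratio_one_of_ev_affine {g : ℝ → ℝ} {x a b : ℝ} (hx : x ∈ Set.Ioo (0:ℝ) 1)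
    (hg : StrictMonoOn g (Set.Icc 0 1)) (hev : ∀ᶠ y in 𝓝 x, g y = a * y + b) :
    slopeRatio g x = 1 := by
  have hgx : g x = a * x + b := hev.self_of_nhds
  -- a is positive
  obtain ⟨η, hη, hball⟩ := Metric.eventually_nhds_iff.mp hev
  set y := min (x + η/2) ((x+1)/2) with hy
  have hxy : x < y := lt_min (by linarith) (by nlinarith [hx.2])
  have hy1 : y < 1 := min_lt_of_right_lt (by nlinarith [hx.2])
  have hyd : y - x < η := by
    have := min_le_left (x + η/2) ((x+1)/2); linarith
  have hgy : g y = a * y + b := by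
    apply hball; rw [Real.dist_eq, abs_lt]; constructor <;> linarith
  have hlt : g x < g y := hg ⟨hx.1.le, hx.2.le⟩ ⟨by linarith [hx.1], hy1.le⟩ hxy
  have ha : 0 < a := by nlinarith
  have hr : rightDeriv g x = a := by
    rw [rightDeriv,
      Filter.EventuallyEq.derivWithin_eq (hev.filter_mono nhdsWithin_le_nhds) hgx]
    exact aux_rightDeriv_affine a b x
  have hl : leftDeriv g x = a := by
    rw [leftDeriv,
      Filter.EventuallyEq.derivWithin_eq (hev.filter_mono nhdsWithin_le_nhds) hgx]
    exact aux_leftDeriv_affine a b x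
  rw [slopeRatio, hr, hl, div_self ha.ne']

lemma aux_breakPts_finite {g : ℝ → ℝ} (hg : IsPLHomeo g) : (breakPts g).Finite := by
  obtain ⟨S, hS⟩ := hg.2.2.2.2.2.2
  apply Set.Finite.subset S.finite_toSet
  intro x hx
  by_contra hxS
  obtain ⟨hIoo, hne⟩ := hx
  obtain ⟨a, b, hev⟩ := hS x ⟨⟨hIoo.1.le, hIoo.2.le⟩, hxS⟩
  have heq : 𝓝[Set.Icc (0:ℝ) 1] x = 𝓝 x :=
    nhdsWithin_eq_nhds.mpr (Icc_mem_nhds hIoo.1 hIoo.2)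
  exact hne (aux_ratio_one_of_ev_affine hIoo hg.2.2.1 (heq ▸ hev))

lemma aux_comp_ratio_one {f g : ℝ → ℝ} {x : ℝ} (hx : x ∈ Set.Ioo (0:ℝ) 1)
    (hu : g x ∈ Set.Ioo (0:ℝ) 1) (hg : StrictMonoOn g (Set.Icc 0 1))
    (hgr : slopeRatio g x = 1) (hfr : slopeRatio f (g x) = 1) :
    slopeRatio (f ∘ g) x = 1 := by
  have hl0 : leftDeriv g x ≠ 0 := fun h0 => by
    rw [slopeRatio, h0, div_zero] at hgr; exact one_ne_zero hgr.symm
  have hrl : rightDeriv g x = leftDeriv g x := by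
    rwa [slopeRatio, div_eq_one_iff_eq hl0] at hgr
  have hr0 : rightDeriv g x ≠ 0 := hrl ▸ hl0
  have hfl0 : leftDeriv f (g x) ≠ 0 := fun h0 => by
    rw [slopeRatio, h0, div_zero] at hfr; exact one_ne_zero hfr.symm
  have hfrl : rightDeriv f (g x) = leftDeriv f (g x) := by
    rwa [slopeRatio, div_eq_one_iff_eq hfl0] at hfr
  have hfr0 : rightDeriv f (g x) ≠ 0 := hfrl ▸ hfl0
  have hIcc : Set.Icc (0:ℝ) 1 ∈ 𝓝 x := Icc_mem_nhds hx.1 hx.2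
  -- differentiability
  have hdgR : DifferentiableWithinAt ℝ g (Set.Ioi x) x := by
    by_contra hh; exact hr0 (derivWithin_zero_of_not_differentiableWithinAt hh)
  have hdgL : DifferentiableWithinAt ℝ g (Set.Iio x) x := by
    by_contra hh; exact hl0 (derivWithin_zero_of_not_differentiableWithinAt hh)
  have hdfR : DifferentiableWithinAt ℝ f (Set.Ioi (g x)) (g x) := by
    by_contra hh; exact hfr0 (derivWithin_zero_of_not_differentiableWithinAt hh)
  have hdfL : DifferentiableWithinAt ℝ f (Set.Iio (g x)) (g x) := by
    by_contra hh; exact hfl0 (derivWithin_zero_of_not_differentiableWithinAt hh)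
  -- right derivative of composition
  have hR : rightDeriv (f ∘ g) x = rightDeriv f (g x) * rightDeriv g x := by
    have hmapsR : Set.MapsTo g (Set.Ioi x ∩ Set.Icc 0 1) (Set.Ioi (g x)) :=
      fun y hy => hg ⟨hx.1.le, hx.2.le⟩ hy.2 hy.1
    have hcomp := (hdfR.hasDerivWithinAt.comp x
      (hdgR.hasDerivWithinAt.mono Set.inter_subset_left) hmapsR)
    have hmem : Set.Ioi x ∩ Set.Icc 0 1 ∈ 𝓝[>] x :=
      Filter.inter_mem self_mem_nhdsWithin (mem_nhdsWithin_of_mem_nhds hIcc)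
    exact (hcomp.mono_of_mem_nhdsWithin hmem).derivWithin (uniqueDiffWithinAt_Ioi x)
  have hL : leftDeriv (f ∘ g) x = leftDeriv f (g x) * leftDeriv g x := by
    have hmapsL : Set.MapsTo g (Set.Iio x ∩ Set.Icc 0 1) (Set.Iio (g x)) :=
      fun y hy => hg hy.2 ⟨hx.1.le, hx.2.le⟩ hy.1
    have hcomp := (hdfL.hasDerivWithinAt.comp x
      (hdgL.hasDerivWithinAt.mono Set.inter_subset_left) hmapsL)
    have hmem : Set.Iio x ∩ Set.Icc 0 1 ∈ 𝓝[<] x :=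
      Filter.inter_mem self_mem_nhdsWithin (mem_nhdsWithin_of_mem_nhds hIcc)
    exact (hcomp.mono_of_mem_nhdsWithin hmem).derivWithin (uniqueDiffWithinAt_Iio x)
  rw [slopeRatio, hR, hL, hrl, hfrl, div_self (mul_ne_zero hfl0 hl0)]

lemma aux_mem_Ioo_image {g : ℝ → ℝ} (hg : IsPLHomeo g) {x : ℝ} (hx : x ∈ Set.Ioo (0:ℝ) 1) :
    g x ∈ Set.Ioo (0:ℝ) 1 := by
  obtain ⟨h0, h1, hmono, -⟩ := hg
  constructor
  · have := hmono (Set.left_mem_Icc.mpr zero_le_one) ⟨hx.1.le, hx.2.le⟩ hx.1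
    rwa [h0] at this
  · have := hmono ⟨hx.1.le, hx.2.le⟩ (Set.right_mem_Icc.mpr zero_le_one) hx.2
    rwa [h1] at this

lemma aux_comp_PL {f g : ℝ → ℝ} (hf : IsPLHomeo f) (hg : IsPLHomeo g) :
    IsPLHomeo (f ∘ g) := by
  obtain ⟨hg0, hg1, hgm, hgc, hgmaps, hgsurj, Sg, hSg⟩ := hg
  obtain ⟨hf0, hf1, hfm, hfc, hfmaps, hfsurj, Sf, hSf⟩ := hf
  refine ⟨by simp [Function.comp, hg0, hf0], by simp [Function.comp, hg1, hf1],
    fun x hx y hy hxy => hfm (hgmaps hx) (hgmaps hy) (hgm hx hy hxy),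
    hfc.comp hgc hgmaps, hfmaps.comp hgmaps, hfsurj.comp hgsurj, ?_⟩
  -- exceptional set
  have hpre : Set.Finite {x ∈ Set.Icc (0:ℝ) 1 | g x ∈ (Sf : Set ℝ)} := by
    have : {x ∈ Set.Icc (0:ℝ) 1 | g x ∈ (Sf : Set ℝ)} ⊆
        ⋃ s ∈ (Sf : Set ℝ), {x ∈ Set.Icc (0:ℝ) 1 | g x = s} := by
      intro x hx; simp only [Set.mem_iUnion]; exact ⟨g x, hx.2, hx.1, rfl⟩
    apply Set.Finite.subset _ this
    apply Set.Finite.biUnion Sf.finite_toSet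
    intro s _
    apply Set.Subsingleton.finite
    intro a ha b hb
    exact hgm.injOn ha.1 hb.1 (ha.2.trans hb.2.symm)
  refine ⟨Sg ∪ hpre.toFinset, fun x hx => ?_⟩
  have hxI : x ∈ Set.Icc (0:ℝ) 1 := hx.1
  have hxSg : x ∉ (Sg : Set ℝ) := fun h => hx.2 (by simp [h])
  have hxSf : g x ∉ (Sf : Set ℝ) := fun h => hx.2 (by simp only [Finset.coe_union, Set.mem_union, Set.Finite.coe_toFinset, Set.mem_setOf_eq]; exact Or.inr ⟨hxI, h⟩)
  obtain ⟨a, b, hev⟩ := hSg x ⟨hxI, hxSg⟩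
  obtain ⟨a', b', hev'⟩ := hSf (g x) ⟨hgmaps hxI, hxSf⟩
  refine ⟨a' * a, a' * b + b', ?_⟩
  have htend : Filter.Tendsto g (𝓝[Set.Icc (0:ℝ) 1] x) (𝓝[Set.Icc (0:ℝ) 1] (g x)) :=
    (hgc x hxI).tendsto_nhdsWithin hgmaps
  filter_upwards [hev, htend.eventually hev'] with y h1 h2
  rw [Function.comp_apply, h2, h1]; ring

/-- break points of a composition -/
lemma aux_breakPts_comp {f g : ℝ → ℝ} (hf : IsPLHomeo f) (hg : IsPLHomeo g) :
    breakPts (f ∘ g) ⊆ breakPts g ∪ {x ∈ Set.Ioo (0:ℝ) 1 | g x ∈ breakPts f} := by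
  intro x hx
  by_contra hcon
  rw [Set.mem_union] at hcon
  push_neg at hcon
  have hxIoo : x ∈ Set.Ioo (0:ℝ) 1 := hx.1
  have hgx : g x ∈ Set.Ioo (0:ℝ) 1 := aux_mem_Ioo_image hg hxIoo
  have h1 : slopeRatio g x = 1 := by
    by_contra hne; exact hcon.1 ⟨hxIoo, hne⟩
  have h2 : slopeRatio f (g x) = 1 := by
    by_contra hne; exact hcon.2 ⟨hxIoo, hgx, hne⟩
  exact hx.2 (aux_comp_ratio_one hxIoo hgx hg.2.2.1 h1 h2)

/-! ### The perturbation map ψ -/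

noncomputable def auxTent (p q r z : ℝ) : ℝ := max 0 (min ((z - p) / (q - p)) ((r - z) / (r - q)))

noncomputable def auxPsi (p q r ε z : ℝ) : ℝ := z + ε * auxTent p q r z

section Psi

variable {p q r ε : ℝ} (hpq : p < q) (hqr : q < r)

include hpq in
lemma auxTent_left {z : ℝ} (hz : z ≤ p) : auxTent p q r z = 0 := by
  rw [auxTent, max_eq_left]
  exact min_le_of_left_le (div_nonpos_of_nonpos_of_nonneg (by linarith) (by linarith))

include hqr in
lemma auxTent_right {z : ℝ} (hz : r ≤ z) : auxTent p q r z = 0 := by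
  rw [auxTent, max_eq_left]
  exact min_le_of_right_le (div_nonpos_of_nonpos_of_nonneg (by linarith) (by linarith))

include hpq hqr in
lemma auxTent_mid1 {z : ℝ} (h1 : p ≤ z) (h2 : z ≤ q) :
    auxTent p q r z = (z - p) / (q - p) := by
  rw [auxTent, min_eq_left, max_eq_right]
  · exact div_nonneg (by linarith) (by linarith)
  · rw [div_le_div_iff₀ (by linarith) (by linarith)]
    nlinarith

include hpq hqr in
lemma auxTent_mid2 {z : ℝ} (h1 : q ≤ z) (h2 : z ≤ r) :
    auxTent p q r z = (r - z) / (r - q) := by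
  rw [auxTent, min_eq_right, max_eq_right]
  · exact div_nonneg (by linarith) (by linarith)
  · rw [div_le_div_iff₀ (by linarith) (by linarith)]
    nlinarith

include hpq hqr in
lemma auxTent_lip (z w : ℝ) :
    |auxTent p q r z - auxTent p q r w| ≤ |z - w| * max (q - p)⁻¹ (r - q)⁻¹ := by
  have h1 : |auxTent p q r z - auxTent p q r w| ≤
      |min ((z - p) / (q - p)) ((r - z) / (r - q)) -
        min ((w - p) / (q - p)) ((r - w) / (r - q))| := by
    have h0 := abs_max_sub_max_le_max (0:ℝ) (min ((z - p) / (q - p)) ((r - z) / (r - q)))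
      0 (min ((w - p) / (q - p)) ((r - w) / (r - q)))
    simp at h0
    exact h0
  refine h1.trans ((abs_min_sub_min_le_max _ _ _ _).trans ?_)
  have e1 : (z - p) / (q - p) - (w - p) / (q - p) = (z - w) / (q - p) := by ring
  have e2 : (r - z) / (r - q) - (r - w) / (r - q) = (w - z) / (r - q) := by ring
  rw [e1, e2, abs_div, abs_div, abs_of_pos (by linarith : (0:ℝ) < q - p),
    abs_of_pos (by linarith : (0:ℝ) < r - q), abs_sub_comm w z]
  rw [div_eq_mul_inv, div_eq_mul_inv]
  exact max_le (mul_le_mul_of_nonneg_left (le_max_left _ _) (abs_nonneg _))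
    (mul_le_mul_of_nonneg_left (le_max_right _ _) (abs_nonneg _))

include hpq hqr in
lemma auxPsi_strictMono (hε0 : 0 < ε) (hε1 : ε < q - p) (hε2 : ε < r - q) :
    StrictMono (auxPsi p q r ε) := by
  intro z w hzw
  have hlip := auxTent_lip hpq hqr w z
  have hM : ε * max (q - p)⁻¹ (r - q)⁻¹ < 1 := by
    rw [mul_max_of_nonneg _ _ hε0.le]
    apply max_lt
    · rw [← div_eq_mul_inv, div_lt_one (by linarith)]; exact hε1
    · rw [← div_eq_mul_inv, div_lt_one (by linarith)]; exact hε2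
  have habs : |auxTent p q r w - auxTent p q r z| ≤ |w - z| * max (q - p)⁻¹ (r - q)⁻¹ :=
    hlip
  rw [abs_of_pos (by linarith : (0:ℝ) < w - z)] at habs
  have hb := abs_le.mp habs
  have hMpos : 0 ≤ max (q - p)⁻¹ (r - q)⁻¹ :=
    le_max_of_le_left (inv_nonneg.mpr (by linarith))
  rw [auxPsi, auxPsi]
  nlinarith [hb.1, mul_le_mul_of_nonneg_left hb.1 hε0.le]

lemma auxTent_continuous (hpq : p < q) (hqr : q < r) : Continuous (auxTent p q r) := by
  apply Continuous.max continuous_const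
  exact Continuous.min (by continuity) (by continuity)

lemma auxPsi_continuous (hpq : p < q) (hqr : q < r) : Continuous (auxPsi p q r ε) :=
  continuous_id.add (continuous_const.mul (auxTent_continuous hpq hqr))

include hpq in
lemma auxPsi_left {z : ℝ} (hz : z ≤ p) : auxPsi p q r ε z = z := by
  rw [auxPsi, auxTent_left hpq hz, mul_zero, add_zero]

include hqr in
lemma auxPsi_right {z : ℝ} (hz : r ≤ z) : auxPsi p q r ε z = z := by
  rw [auxPsi, auxTent_right hqr hz, mul_zero, add_zero]

include hpq hqr in
lemma auxPsi_mid1 {z : ℝ} (h1 : p ≤ z) (h2 : z ≤ q) :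
    auxPsi p q r ε z = (1 + ε / (q - p)) * z + (-(ε * p) / (q - p)) := by
  rw [auxPsi, auxTent_mid1 hpq hqr h1 h2]
  field_simp
  ring

include hpq hqr in
lemma auxPsi_mid2 {z : ℝ} (h1 : q ≤ z) (h2 : z ≤ r) :
    auxPsi p q r ε z = (1 - ε / (r - q)) * z + (ε * r) / (r - q) := by
  rw [auxPsi, auxTent_mid2 hpq hqr h1 h2]
  field_simp
  ring

include hpq hqr in
lemma auxPsi_q : auxPsi p q r ε q = q + ε := by
  rw [auxPsi_mid1 hpq hqr hpq.le le_rfl]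
  have h : q - p ≠ 0 := by linarith
  field_simp
  ring

include hpq hqr in
lemma auxPsi_PL (hp : 0 ≤ p) (hr1 : r ≤ 1) (hε0 : 0 < ε) (hε1 : ε < q - p)
    (hε2 : ε < r - q) : IsPLHomeo (auxPsi p q r ε) := by
  have hmono := auxPsi_strictMono hpq hqr hε0 hε1 hε2
  have hcont := auxPsi_continuous hpq hqr (ε := ε)
  have h0 : auxPsi p q r ε 0 = 0 := auxPsi_left hpq hp
  have h1 : auxPsi p q r ε 1 = 1 := auxPsi_right hqr hr1
  refine ⟨h0, h1, hmono.strictMonoOn _, hcont.continuousOn, ?_, ?_, ?_⟩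
  · intro z hz
    constructor
    · have := hmono.monotone hz.1; rwa [h0] at this
    · have := hmono.monotone hz.2; rwa [h1] at this
  · have := intermediate_value_Icc zero_le_one hcont.continuousOn
    rwa [h0, h1] at this
  · refine ⟨{p, q, r}, fun x hx => ?_⟩
    have hxp : x ≠ p := fun h => hx.2 (by simp [h])
    have hxq : x ≠ q := fun h => hx.2 (by simp [h])
    have hxr : x ≠ r := fun h => hx.2 (by simp [h])
    rcases lt_or_gt_of_ne hxp with h | h
    · refine ⟨1, 0, ?_⟩
      filter_upwards [mem_nhdsWithin_of_mem_nhds (isOpen_Iio.mem_nhds h)] with y hy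
      rw [auxPsi_left hpq (le_of_lt hy)]; ring
    rcases lt_or_gt_of_ne hxq with h2 | h2
    · refine ⟨1 + ε / (q - p), -(ε * p) / (q - p), ?_⟩
      filter_upwards [mem_nhdsWithin_of_mem_nhds (isOpen_Ioo.mem_nhds
        (⟨h, h2⟩ : x ∈ Set.Ioo p q))] with y hy
      exact auxPsi_mid1 hpq hqr hy.1.le hy.2.le
    rcases lt_or_gt_of_ne hxr with h3 | h3
    · refine ⟨1 - ε / (r - q), (ε * r) / (r - q), ?_⟩
      filter_upwards [mem_nhdsWithin_of_mem_nhds (isOpen_Ioo.mem_nhds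
        (⟨h2, h3⟩ : x ∈ Set.Ioo q r))] with y hy
      exact auxPsi_mid2 hpq hqr hy.1.le hy.2.le
    · refine ⟨1, 0, ?_⟩
      filter_upwards [mem_nhdsWithin_of_mem_nhds (isOpen_Ioi.mem_nhds h3)] with y hy
      rw [auxPsi_right hqr (le_of_lt hy)]; ring

noncomputable def auxSR (p q r ε z : ℝ) : ℝ :=
  if z < p then 1 else if z < q then 1 + ε / (q - p) else if z < r then 1 - ε / (r - q) else 1

noncomputable def auxSL (p q r ε z : ℝ) : ℝ :=
  if z ≤ p then 1 else if z ≤ q then 1 + ε / (q - p) else if z ≤ r then 1 - ε / (r - q) else 1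

include hpq hqr in
lemma auxSR_pos (hε0 : 0 < ε) (hε2 : ε < r - q) (z : ℝ) : 0 < auxSR p q r ε z := by
  rw [auxSR]
  have h1 : (0:ℝ) < 1 + ε / (q - p) := by
    have := div_nonneg hε0.le (by linarith : (0:ℝ) ≤ q - p); linarith
  have h2 : (0:ℝ) < 1 - ε / (r - q) := by
    rw [sub_pos, div_lt_one (by linarith)]; exact hε2
  split_ifs <;> linarith [h1, h2]

include hpq hqr in
lemma auxSL_pos (hε0 : 0 < ε) (hε2 : ε < r - q) (z : ℝ) : 0 < auxSL p q r ε z := by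
  rw [auxSL]
  have h1 : (0:ℝ) < 1 + ε / (q - p) := by
    have := div_nonneg hε0.le (by linarith : (0:ℝ) ≤ q - p); linarith
  have h2 : (0:ℝ) < 1 - ε / (r - q) := by
    rw [sub_pos, div_lt_one (by linarith)]; exact hε2
  split_ifs <;> linarith [h1, h2]

lemma aux_tendsto_right {h : ℝ → ℝ} (hc : ContinuousOn h (Set.Icc 0 1)) {x : ℝ}
    (hx : x ∈ Set.Ioo (0:ℝ) 1) : Filter.Tendsto h (𝓝[>] x) (𝓝 (h x)) := by
  have h1 : 𝓝[>] x = 𝓝[Set.Ioo x 1] x := by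
    rw [nhdsWithin_restrict' (Set.Ioi x) (isOpen_Iio.mem_nhds hx.2), Set.Ioi_inter_Iio]
  rw [h1]
  exact (hc x ⟨hx.1.le, hx.2.le⟩).mono_left
    (nhdsWithin_mono x (fun y hy => ⟨(hx.1.trans hy.1).le, hy.2.le⟩))

lemma aux_tendsto_left {h : ℝ → ℝ} (hc : ContinuousOn h (Set.Icc 0 1)) {x : ℝ}
    (hx : x ∈ Set.Ioo (0:ℝ) 1) : Filter.Tendsto h (𝓝[<] x) (𝓝 (h x)) := by
  have h1 : 𝓝[<] x = 𝓝[Set.Ioo 0 x] x := by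
    rw [nhdsWithin_restrict' (Set.Iio x) (isOpen_Ioi.mem_nhds hx.1),
      Set.inter_comm, Set.Ioi_inter_Iio]
  rw [h1]
  exact (hc x ⟨hx.1.le, hx.2.le⟩).mono_left
    (nhdsWithin_mono x (fun y hy => ⟨hy.1.le, (hy.2.trans hx.2).le⟩))

lemma aux_ev_gt {h : ℝ → ℝ} (hm : StrictMonoOn h (Set.Icc 0 1)) {x : ℝ}
    (hx : x ∈ Set.Ioo (0:ℝ) 1) : ∀ᶠ y in 𝓝[>] x, h x < h y := by
  filter_upwards [Ioo_mem_nhdsGT_of_mem (⟨le_rfl, hx.2⟩ : x ∈ Set.Ico x 1)] with y hy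
  exact hm ⟨hx.1.le, hx.2.le⟩ ⟨(hx.1.trans hy.1).le, hy.2.le⟩ hy.1

lemma aux_ev_lt {h : ℝ → ℝ} (hm : StrictMonoOn h (Set.Icc 0 1)) {x : ℝ}
    (hx : x ∈ Set.Ioo (0:ℝ) 1) : ∀ᶠ y in 𝓝[<] x, h y < h x := by
  filter_upwards [Ioo_mem_nhdsLT_of_mem (⟨hx.1, le_rfl⟩ : x ∈ Set.Ioc 0 x)] with y hy
  exact hm ⟨hy.1.le, (hy.2.trans hx.2).le⟩ ⟨hx.1.le, hx.2.le⟩ hy.2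

include hpq hqr in
lemma auxPsi_comp_rightDeriv (hε0 : 0 < ε) (hε2 : ε < r - q)
    {h : ℝ → ℝ} (hm : StrictMonoOn h (Set.Icc 0 1)) (hc : ContinuousOn h (Set.Icc 0 1))
    {x : ℝ} (hx : x ∈ Set.Ioo (0:ℝ) 1) :
    rightDeriv (auxPsi p q r ε ∘ h) x = auxSR p q r ε (h x) * rightDeriv h x := by
  have htd := aux_tendsto_right hc hx
  have hgt := aux_ev_gt hm hx
  have hs1 : (1:ℝ) + ε / (q - p) ≠ 0 := by
    have := div_nonneg hε0.le (by linarith : (0:ℝ) ≤ q - p); intro hc0; linarith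
  have hs2 : (1:ℝ) - ε / (r - q) ≠ 0 := by
    have : ε / (r - q) < 1 := by rw [div_lt_one (by linarith)]; exact hε2
    linarith
  rcases lt_or_ge (h x) p with hu | hu
  · rw [auxSR, if_pos hu]
    apply aux_rightDeriv_comp_affine (a := 1) (b := 0) one_ne_zero
    · filter_upwards [htd.eventually_lt_const hu] with y hy
      rw [auxPsi_left hpq hy.le]; ring
    · rw [auxPsi_left hpq hu.le]; ring
  rcases lt_or_ge (h x) q with hu2 | hu2
  · rw [auxSR, if_neg (not_lt.mpr hu), if_pos hu2]
    have hge : ∀ᶠ y in 𝓝[>] x, p ≤ h y := by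
      rcases eq_or_lt_of_le hu with he | hlt
      · filter_upwards [hgt] with y hy; linarith [he ▸ hy]
      · filter_upwards [htd.eventually_const_lt hlt] with y hy; exact hy.le
    apply aux_rightDeriv_comp_affine hs1
    · filter_upwards [hge, htd.eventually_lt_const hu2] with y h1 h2
      exact auxPsi_mid1 hpq hqr h1 h2.le
    · exact auxPsi_mid1 hpq hqr hu hu2.le
  rcases lt_or_ge (h x) r with hu3 | hu3
  · rw [auxSR, if_neg (not_lt.mpr hu), if_neg (not_lt.mpr hu2), if_pos hu3]
    have hge : ∀ᶠ y in 𝓝[>] x, q ≤ h y := by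
      rcases eq_or_lt_of_le hu2 with he | hlt
      · filter_upwards [hgt] with y hy; linarith [he ▸ hy]
      · filter_upwards [htd.eventually_const_lt hlt] with y hy; exact hy.le
    apply aux_rightDeriv_comp_affine hs2
    · filter_upwards [hge, htd.eventually_lt_const hu3] with y h1 h2
      exact auxPsi_mid2 hpq hqr h1 h2.le
    · exact auxPsi_mid2 hpq hqr hu2 hu3.le
  · rw [auxSR, if_neg (not_lt.mpr hu), if_neg (not_lt.mpr hu2), if_neg (not_lt.mpr hu3)]
    have hge : ∀ᶠ y in 𝓝[>] x, r ≤ h y := by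
      rcases eq_or_lt_of_le hu3 with he | hlt
      · filter_upwards [hgt] with y hy; linarith [he ▸ hy]
      · filter_upwards [htd.eventually_const_lt hlt] with y hy; exact hy.le
    apply aux_rightDeriv_comp_affine (a := 1) (b := 0) one_ne_zero
    · filter_upwards [hge] with y hy
      rw [auxPsi_right hqr hy]; ring
    · rw [auxPsi_right hqr hu3]; ring

include hpq hqr in
lemma auxPsi_comp_leftDeriv (hε0 : 0 < ε) (hε2 : ε < r - q)
    {h : ℝ → ℝ} (hm : StrictMonoOn h (Set.Icc 0 1)) (hc : ContinuousOn h (Set.Icc 0 1))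
    {x : ℝ} (hx : x ∈ Set.Ioo (0:ℝ) 1) :
    leftDeriv (auxPsi p q r ε ∘ h) x = auxSL p q r ε (h x) * leftDeriv h x := by
  have htd := aux_tendsto_left hc hx
  have hlt := aux_ev_lt hm hx
  have hs1 : (1:ℝ) + ε / (q - p) ≠ 0 := by
    have := div_nonneg hε0.le (by linarith : (0:ℝ) ≤ q - p); intro hc0; linarith
  have hs2 : (1:ℝ) - ε / (r - q) ≠ 0 := by
    have : ε / (r - q) < 1 := by rw [div_lt_one (by linarith)]; exact hε2
    linarith
  rcases le_or_gt (h x) p with hu | hu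
  · rw [auxSL, if_pos hu]
    apply aux_leftDeriv_comp_affine (a := 1) (b := 0) one_ne_zero
    · filter_upwards [hlt] with y hy
      rw [auxPsi_left hpq (by linarith)]; ring
    · rw [auxPsi_left hpq hu]; ring
  rcases le_or_gt (h x) q with hu2 | hu2
  · rw [auxSL, if_neg (not_le.mpr hu), if_pos hu2]
    have hle : ∀ᶠ y in 𝓝[<] x, h y ≤ q := by
      rcases eq_or_lt_of_le hu2 with he | hlt2
      · filter_upwards [hlt] with y hy; linarith [he ▸ hy]
      · filter_upwards [htd.eventually_lt_const hlt2] with y hy; exact hy.le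
    apply aux_leftDeriv_comp_affine hs1
    · filter_upwards [hle, htd.eventually_const_lt hu] with y h1 h2
      exact auxPsi_mid1 hpq hqr h2.le h1
    · exact auxPsi_mid1 hpq hqr hu.le hu2
  rcases le_or_gt (h x) r with hu3 | hu3
  · rw [auxSL, if_neg (not_le.mpr hu), if_neg (not_le.mpr hu2), if_pos hu3]
    have hle : ∀ᶠ y in 𝓝[<] x, h y ≤ r := by
      rcases eq_or_lt_of_le hu3 with he | hlt2
      · filter_upwards [hlt] with y hy; linarith [he ▸ hy]
      · filter_upwards [htd.eventually_lt_const hlt2] with y hy; exact hy.le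
    apply aux_leftDeriv_comp_affine hs2
    · filter_upwards [hle, htd.eventually_const_lt hu2] with y h1 h2
      exact auxPsi_mid2 hpq hqr h2.le h1
    · exact auxPsi_mid2 hpq hqr hu2.le hu3
  · rw [auxSL, if_neg (not_le.mpr hu), if_neg (not_le.mpr hu2), if_neg (not_le.mpr hu3)]
    apply aux_leftDeriv_comp_affine (a := 1) (b := 0) one_ne_zero
    · filter_upwards [htd.eventually_const_lt hu3] with y hy
      rw [auxPsi_right hqr hy.le]; ring
    · rw [auxPsi_right hqr hu3.le]; ring

end Psi

/-! ### breakTuple bookkeeping -/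

lemma aux_sort_length {h : ℝ → ℝ} (hfin : (breakPts h).Finite) {k : ℕ}
    (hcard : (breakPts h).ncard = k) : (hfin.toFinset.sort (· ≤ ·)).length = k := by
  rw [Finset.length_sort, ← Set.ncard_eq_toFinset_card _ hfin, hcard]

lemma aux_breakTuple_spec {h : ℝ → ℝ} (hfin : (breakPts h).Finite) {k : ℕ}
    (hlen : (hfin.toFinset.sort (· ≤ ·)).length = k) (j : Fin k) :
    breakTuple k h j = ((hfin.toFinset.sort (· ≤ ·)).get (Fin.cast hlen.symm j),
      h ((hfin.toFinset.sort (· ≤ ·)).get (Fin.cast hlen.symm j))) := by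
  rw [breakTuple]
  rw [dif_pos hfin]
  have h2 : (j : ℕ) < (hfin.toFinset.sort (· ≤ ·)).length := by rw [hlen]; exact j.2
  rw [dif_pos h2]; rfl

lemma aux_mem_sort_iff {h : ℝ → ℝ} (hfin : (breakPts h).Finite) {x : ℝ} :
    x ∈ hfin.toFinset.sort (· ≤ ·) ↔ x ∈ breakPts h := by
  rw [Finset.mem_sort, Set.Finite.mem_toFinset]

/-! ### finiteness of bad parameter sets -/

lemma aux_div_one {a b : ℝ} (h : a / b = 1) : b ≠ 0 ∧ a = b := by
  have hb : b ≠ 0 := by intro h0; rw [h0, div_zero] at h; exact one_ne_zero h.symm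
  exact ⟨hb, by field_simp at h; exact h⟩

lemma aux_bad1 {A R L : ℝ} (hA : 0 < A) :
    {ε : ℝ | (1 + ε / A) * R / L = 1}.Subsingleton := by
  intro e1 h1 e2 h2
  obtain ⟨hL, h1⟩ := aux_div_one h1
  obtain ⟨-, h2⟩ := aux_div_one h2
  have hR : R ≠ 0 := by intro h0; rw [h0, mul_zero] at h1; exact hL h1.symm
  have hA0 : A ≠ 0 := hA.ne'
  have := h1.trans h2.symm
  have h3 := mul_right_cancel₀ hR this
  have h4 : e1 / A = e2 / A := by linarith [h3]
  field_simp at h4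
  exact h4
lemma aux_bad3 {B R L : ℝ} (hB : 0 < B) :
    {ε : ℝ | R / ((1 - ε / B) * L) = 1}.Subsingleton := by
  intro e1 h1 e2 h2
  obtain ⟨hL, h1⟩ := aux_div_one h1
  obtain ⟨hL2, h2⟩ := aux_div_one h2
  have hL0 : L ≠ 0 := fun h0 => hL (by rw [h0, mul_zero])
  have := h1.symm.trans h2
  have hB0 : B ≠ 0 := hB.ne'
  have h3 : (1 - e1 / B) = (1 - e2 / B) := mul_left_injective₀ hL0 this
  have h4 : e1 / B = e2 / B := by linarith [h3]
  field_simp at h4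
  exact h4

lemma aux_bad2 {A B R L : ℝ} (hA : 0 < A) (hB : 0 < B) :
    {ε : ℝ | (1 - ε / B) * R / ((1 + ε / A) * L) = 1}.Subsingleton := by
  intro e1 h1 e2 h2
  obtain ⟨hD1, h1⟩ := aux_div_one h1
  obtain ⟨hD2, h2⟩ := aux_div_one h2
  have hL0 : L ≠ 0 := fun h0 => hD1 (by rw [h0, mul_zero])
  -- clear denominators
  have hA0 : A ≠ 0 := hA.ne'
  have hB0 : B ≠ 0 := hB.ne'
  have e1' : (B - e1) * R * A = (A + e1) * L * B := by
    have h1' := h1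
    field_simp at h1'
    linear_combination h1'
  have e2' : (B - e2) * R * A = (A + e2) * L * B := by
    have h2' := h2
    field_simp at h2'
    linear_combination h2'
  by_contra hne
  have hRA : R * A = -(L * B) := by
    have hd : e1 - e2 ≠ 0 := fun h0 => hne (by linarith [sub_eq_zero.mp h0])
    have hz : (e1 - e2) * (R * A + L * B) = 0 := by linear_combination e2' - e1'
    rcases mul_eq_zero.mp hz with h0 | h0
    · exact absurd h0 hd
    · linarith
  -- substitute back
  have : L * B * (A + B) = 0 := by linear_combination (B - e1) * hRA - e1'
  have hLB : L * B ≠ 0 := mul_ne_zero hL0 hB0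
  have := mul_eq_zero.mp this
  rcases this with h0 | h0
  · exact hLB h0
  · linarith

/-! ### the perturbation argument : sections with a fixed second coordinate are nowhere dense -/

lemma aux_nwd (k : ℕ) (i : Fin k) (y : ℝ) :
    interior {h : An k | (breakTuple k h.1 i).2 = y} = ∅ := by
  set C : Set (An k) := {h : An k | (breakTuple k h.1 i).2 = y} with hC
  by_contra hne
  obtain ⟨h0, hh0⟩ := Set.nonempty_iff_ne_empty.mpr hne
  obtain ⟨W, hWopen, hWpre⟩ := isOpen_induced_iff.mp
    (isOpen_interior (s := C) : IsOpen (interior C))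
  have hmemW : breakTuple k h0.1 ∈ W := by
    rw [← hWpre] at hh0; exact hh0
  -- basic data about h0
  obtain ⟨hPL, hcard⟩ := h0.2
  set h := h0.1 with hh
  have hmono : StrictMonoOn h (Set.Icc 0 1) := hPL.2.2.1
  have hcont : ContinuousOn h (Set.Icc 0 1) := hPL.2.2.2.1
  have hfin : (breakPts h).Finite := aux_breakPts_finite hPL
  have hlen := aux_sort_length hfin hcard
  set X : Fin k → ℝ := fun j => (hfin.toFinset.sort (· ≤ ·)).get (Fin.cast hlen.symm j)
    with hX
  have hXmem : ∀ j, X j ∈ breakPts h := fun j =>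
    (aux_mem_sort_iff hfin).mp (List.get_mem _ _)
  have hXIoo : ∀ j, X j ∈ Set.Ioo (0:ℝ) 1 := fun j => (hXmem j).1
  have hXicc : ∀ j, X j ∈ Set.Icc (0:ℝ) 1 := fun j => ⟨(hXIoo j).1.le, (hXIoo j).2.le⟩
  have hXmono : StrictMono X := by
    intro a b hab
    exact (Finset.sortedLT_sort _).strictMono_get (by simpa using hab)
  have hsurjX : ∀ x ∈ breakPts h, ∃ j : Fin k, X j = x := by
    intro x hx
    obtain ⟨n, hget⟩ := List.mem_iff_get.mp ((aux_mem_sort_iff hfin).mpr hx)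
    refine ⟨⟨n.1, hlen ▸ n.2⟩, ?_⟩
    rw [hX, ← hget]
    congr 1
  set Y : Fin k → ℝ := fun j => h (X j) with hY
  have hYIoo : ∀ j, Y j ∈ Set.Ioo (0:ℝ) 1 := fun j => aux_mem_Ioo_image hPL (hXIoo j)
  have hYmono : StrictMono Y := fun a b hab =>
    hmono (hXicc a) (hXicc b) (hXmono hab)
  have htuple : ∀ j, breakTuple k h j = (X j, Y j) := fun j =>
    aux_breakTuple_spec hfin hlen j
  have hyY : y = Y i := by
    have := interior_subset hh0
    rw [hC, Set.mem_setOf_eq, ← hh, htuple i] at this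
    exact this.symm
  -- knots
  set q : ℝ := Y i with hq
  set p : ℝ := if h1 : (i : ℕ) = 0 then 0 else Y ⟨(i : ℕ) - 1, by omega⟩ with hp
  set r : ℝ := if h1 : (i : ℕ) = k - 1 then 1 else
    Y ⟨(i : ℕ) + 1, by have := i.2; omega⟩ with hr
  have hpq : p < q := by
    rw [hp]
    split_ifs with h1
    · exact (hYIoo i).1
    · exact hYmono (by rw [Fin.lt_def]; exact Nat.sub_lt (Nat.pos_of_ne_zero h1) one_pos)
  have hqr : q < r := by
    rw [hr]
    split_ifs with h1
    · exact (hYIoo i).2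
    · exact hYmono (by rw [Fin.lt_def]; exact Nat.lt_succ_self _)
  have hp0 : 0 ≤ p := by
    rw [hp]; split_ifs with h1
    · exact le_refl 0
    · exact (hYIoo _).1.le
  have hr1 : r ≤ 1 := by
    rw [hr]; split_ifs with h1
    · exact le_refl 1
    · exact (hYIoo _).2.le
  -- classification of the other knots
  have hjlt : ∀ j : Fin k, j < i → Y j ≤ p := by
    intro j hj
    rw [hp]
    have hi0 : (i : ℕ) ≠ 0 := by
      intro h0; rw [Fin.lt_def, h0] at hj; omega
    rw [dif_neg hi0]
    apply hYmono.monotone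
    rw [Fin.le_def]
    simp
    rw [Fin.lt_def] at hj
    omega
  have hjgt : ∀ j : Fin k, i < j → r ≤ Y j := by
    intro j hj
    rw [hr]
    have hik' : (i : ℕ) ≠ k - 1 := by
      intro h0
      rw [Fin.lt_def] at hj
      have := j.2
      omega
    rw [dif_neg hik']
    apply hYmono.monotone
    rw [Fin.le_def]
    simp
    rw [Fin.lt_def] at hj
    omega
  -- slope data
  set Rv : Fin k → ℝ := fun j => rightDeriv h (X j) with hRv
  set Lv : Fin k → ℝ := fun j => leftDeriv h (X j) with hLv
  have hratio : ∀ j, Rv j / Lv j ≠ 1 := fun j => (hXmem j).2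
  -- bad parameter set
  set bad : Set ℝ :=
    ⋃ j : Fin k, {ε : ℝ | auxSR p q r ε (Y j) * Rv j / (auxSL p q r ε (Y j) * Lv j) = 1}
    with hbad
  have hbadfin : bad.Finite := by
    apply Set.finite_iUnion
    intro j
    rcases lt_trichotomy (Y j) p with hzp | hzp | hzp
    · apply Set.Finite.subset (Set.finite_empty)
      intro ε hε
      rw [Set.mem_setOf_eq, auxSR, if_pos hzp, auxSL, if_pos hzp.le, one_mul, one_mul] at hε
      exact absurd hε (hratio j)
    · apply Set.Subsingleton.finite
      intro e1 h1 e2 h2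
      rw [Set.mem_setOf_eq, auxSR, if_neg (by rw [hzp]; exact lt_irrefl p),
        if_pos (hzp ▸ hpq), auxSL, if_pos hzp.le, one_mul] at h1 h2
      exact aux_bad1 (by linarith : (0:ℝ) < q - p) h1 h2
    rcases lt_trichotomy (Y j) q with hzq | hzq | hzq
    · apply Set.Finite.subset (Set.finite_empty)
      intro ε hε
      rw [Set.mem_setOf_eq, auxSR, if_neg (not_lt.mpr hzp.le), if_pos hzq,
        auxSL, if_neg (not_le.mpr hzp), if_pos hzq.le] at hε
      rcases eq_or_ne (1 + ε / (q - p)) 0 with hs | hs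
      · rw [hs, zero_mul, zero_mul, div_zero] at hε; exact one_ne_zero hε.symm
      · rw [mul_div_mul_left _ _ hs] at hε; exact absurd hε (hratio j)
    · apply Set.Subsingleton.finite
      intro e1 h1 e2 h2
      rw [Set.mem_setOf_eq, auxSR, if_neg (not_lt.mpr hzp.le),
        if_neg (by rw [hzq]; exact lt_irrefl q),
        if_pos (hzq ▸ hqr), auxSL, if_neg (not_le.mpr hzp), if_pos hzq.le] at h1 h2
      exact aux_bad2 (by linarith : (0:ℝ) < q - p) (by linarith : (0:ℝ) < r - q) h1 h2
    rcases lt_trichotomy (Y j) r with hzr | hzr | hzr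
    · apply Set.Finite.subset (Set.finite_empty)
      intro ε hε
      rw [Set.mem_setOf_eq, auxSR, if_neg (not_lt.mpr hzp.le), if_neg (not_lt.mpr hzq.le),
        if_pos hzr, auxSL, if_neg (not_le.mpr hzp), if_neg (not_le.mpr hzq),
        if_pos hzr.le] at hε
      rcases eq_or_ne (1 - ε / (r - q)) 0 with hs | hs
      · rw [hs, zero_mul, zero_mul, div_zero] at hε; exact one_ne_zero hε.symm
      · rw [mul_div_mul_left _ _ hs] at hε; exact absurd hε (hratio j)
    · apply Set.Subsingleton.finite
      intro e1 h1 e2 h2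
      rw [Set.mem_setOf_eq, auxSR, if_neg (not_lt.mpr hzp.le), if_neg (not_lt.mpr hzq.le),
        if_neg (by rw [hzr]; exact lt_irrefl r), auxSL, if_neg (not_le.mpr hzp),
        if_neg (not_le.mpr hzq), if_pos hzr.le, one_mul] at h1 h2
      exact aux_bad3 (by linarith : (0:ℝ) < r - q) h1 h2
    · apply Set.Finite.subset (Set.finite_empty)
      intro ε hε
      rw [Set.mem_setOf_eq, auxSR, if_neg (not_lt.mpr hzp.le), if_neg (not_lt.mpr hzq.le),
        if_neg (not_lt.mpr hzr.le), auxSL, if_neg (not_le.mpr hzp), if_neg (not_le.mpr hzq),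
        if_neg (not_le.mpr hzr), one_mul, one_mul] at hε
      exact absurd hε (hratio j)
  -- the path of perturbed tuples
  set c : ℝ → (Fin k → ℝ × ℝ) := fun ε j => if j = i then (X i, q + ε) else (X j, Y j)
    with hc
  have hccont : Continuous c := by
    apply continuous_pi
    intro j
    by_cases hji : j = i
    · simp only [hc, hji, if_pos rfl]
      exact (continuous_const.prodMk (continuous_const.add continuous_id))
    · simp only [hc, if_neg hji]
      exact continuous_const
  have hc0 : c 0 = breakTuple k h := by
    funext j
    by_cases hji : j = i
    · subst hji; simp only [hc, if_pos rfl, add_zero, htuple j]; rfl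
    · simp only [hc, if_neg hji, htuple j]
  have hcW : c ⁻¹' W ∈ 𝓝 (0:ℝ) := by
    apply (hWopen.preimage hccont).mem_nhds
    rw [Set.mem_preimage, hc0]; exact hmemW
  obtain ⟨δ, hδ0, hδ⟩ := Metric.mem_nhds_iff.mp hcW
  -- choose ε
  have hεex : ∃ ε : ℝ, ε ∈ (Set.Ioo 0 (min δ (min (q - p) (r - q))) \ bad) := by
    apply Set.Infinite.nonempty
    apply Set.Infinite.diff _ hbadfin
    exact Set.infinite_coe_iff.mp
      (Set.Ioo.infinite (lt_min hδ0 (lt_min (by linarith) (by linarith))))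
  obtain ⟨ε, ⟨hε0, hεlt⟩, hεbad⟩ := hεex
  have hε1 : ε < q - p := lt_of_lt_of_le hεlt (le_trans (min_le_right _ _) (min_le_left _ _))
  have hε2 : ε < r - q := lt_of_lt_of_le hεlt (le_trans (min_le_right _ _) (min_le_right _ _))
  have hεδ : ε < δ := lt_of_lt_of_le hεlt (min_le_left _ _)
  have hbad' : ∀ j : Fin k,
      auxSR p q r ε (Y j) * Rv j / (auxSL p q r ε (Y j) * Lv j) ≠ 1 := by
    intro j hj
    exact hεbad (Set.mem_iUnion.mpr ⟨j, hj⟩)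
  -- the perturbed map
  set ψ : ℝ → ℝ := auxPsi p q r ε with hψ
  have hψPL : IsPLHomeo ψ := auxPsi_PL hpq hqr hp0 hr1 hε0 hε1 hε2
  set h' : ℝ → ℝ := ψ ∘ h with hh'
  have hPL' : IsPLHomeo h' := aux_comp_PL hψPL hPL
  -- the slope ratio of h' at points of (0,1)
  have hratio' : ∀ x ∈ Set.Ioo (0:ℝ) 1, slopeRatio h' x =
      auxSR p q r ε (h x) * rightDeriv h x / (auxSL p q r ε (h x) * leftDeriv h x) := by
    intro x hx
    rw [slopeRatio, hh', auxPsi_comp_rightDeriv hpq hqr hε0 hε2 hmono hcont hx,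
      auxPsi_comp_leftDeriv hpq hqr hε0 hε2 hmono hcont hx]
  have hknot : ∀ j : Fin k, slopeRatio h' (X j) ≠ 1 := by
    intro j
    rw [hratio' (X j) (hXIoo j)]
    exact hbad' j
  have hSRL : ∀ z : ℝ, z ≠ p → z ≠ q → z ≠ r →
      auxSR p q r ε z = auxSL p q r ε z := by
    intro z h1 h2 h3
    rw [auxSR, auxSL]
    rcases lt_or_gt_of_ne h1 with hzp | hzp
    · rw [if_pos hzp, if_pos hzp.le]
    rw [if_neg (not_lt.mpr hzp.le), if_neg (not_le.mpr hzp)]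
    rcases lt_or_gt_of_ne h2 with hzq | hzq
    · rw [if_pos hzq, if_pos hzq.le]
    rw [if_neg (not_lt.mpr hzq.le), if_neg (not_le.mpr hzq)]
    rcases lt_or_gt_of_ne h3 with hzr | hzr
    · rw [if_pos hzr, if_pos hzr.le]
    · rw [if_neg (not_lt.mpr hzr.le), if_neg (not_le.mpr hzr)]
  have hcancel : ∀ x ∈ Set.Ioo (0:ℝ) 1, h x ≠ p → h x ≠ q → h x ≠ r →
      slopeRatio h' x = slopeRatio h x := by
    intro x hx h1 h2 h3
    rw [hratio' x hx, hSRL _ h1 h2 h3,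
      mul_div_mul_left _ _ (auxSL_pos hpq hqr hε0 hε2 _).ne']
    rfl
  have hinj := hmono.injOn
  -- a point of (0,1) whose image is a knot value is a break point of h
  have hknotpt : ∀ x ∈ Set.Ioo (0:ℝ) 1, (h x = p ∨ h x = q ∨ h x = r) →
      x ∈ breakPts h := by
    intro x hx hor
    have hz1 : h x ∈ Set.Ioo (0:ℝ) 1 := aux_mem_Ioo_image hPL hx
    rcases hor with hxp | hxq | hxr
    · rw [hp] at hxp
      by_cases hi0 : (i : ℕ) = 0
      · rw [dif_pos hi0] at hxp; exact absurd hxp hz1.1.ne'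
      · rw [dif_neg hi0] at hxp
        have heq : x = X ⟨(i : ℕ) - 1, by omega⟩ :=
          hinj ⟨hx.1.le, hx.2.le⟩ (hXicc _) hxp
        rw [heq]; exact hXmem _
    · have heq : x = X i := hinj ⟨hx.1.le, hx.2.le⟩ (hXicc _) hxq
      rw [heq]; exact hXmem _
    · rw [hr] at hxr
      by_cases hik' : (i : ℕ) = k - 1
      · rw [dif_pos hik'] at hxr; exact absurd hxr hz1.2.ne
      · rw [dif_neg hik'] at hxr
        have heq : x = X ⟨(i : ℕ) + 1, by have := i.2; omega⟩ :=
          hinj ⟨hx.1.le, hx.2.le⟩ (hXicc _) hxr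
        rw [heq]; exact hXmem _
  -- break points are unchanged
  have hBP : breakPts h' = breakPts h := by
    ext x
    simp only [breakPts, Set.mem_setOf_eq]
    constructor
    · rintro ⟨hx, hne2⟩
      refine ⟨hx, fun hone => ?_⟩
      by_cases hxb : x ∈ breakPts h
      · exact hxb.2 hone
      · have h1 : h x ≠ p := fun hh1 => hxb (hknotpt x hx (Or.inl hh1))
        have h2 : h x ≠ q := fun hh2 => hxb (hknotpt x hx (Or.inr (Or.inl hh2)))
        have h3 : h x ≠ r := fun hh3 => hxb (hknotpt x hx (Or.inr (Or.inr hh3)))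
        exact hne2 (by rw [hcancel x hx h1 h2 h3]; exact hone)
    · rintro ⟨hx, hne2⟩
      obtain ⟨j, hj⟩ := hsurjX x ⟨hx, hne2⟩
      exact ⟨hx, hj ▸ hknot j⟩
  -- the perturbed element of `An k`
  have hcard' : (breakPts h').ncard = k := by rw [hBP]; exact hcard
  have hfin' : (breakPts h').Finite := by rw [hBP]; exact hfin
  have hlen' := aux_sort_length hfin' hcard'
  have hsl : hfin'.toFinset.sort (· ≤ ·) = hfin.toFinset.sort (· ≤ ·) := by
    congr 1
    ext z
    simp [hBP]
  have hget : ∀ j : Fin k,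
      (hfin'.toFinset.sort (· ≤ ·)).get (Fin.cast hlen'.symm j) = X j := by
    intro j
    rw [hX, List.get_of_eq hsl]
    congr 1
  have htuple' : breakTuple k h' = c ε := by
    funext j
    rw [aux_breakTuple_spec hfin' hlen' j, hget j]
    by_cases hji : j = i
    · subst hji
      have : h' (X j) = q + ε := by
        rw [hh', Function.comp_apply]
        exact auxPsi_q hpq hqr
      rw [this, hc]
      simp
    · rw [hc]
      simp only [if_neg hji]
      rcases lt_or_gt_of_ne (Fin.val_ne_of_ne hji) with hlt | hgt
      · have : h' (X j) = Y j := by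
          rw [hh', Function.comp_apply]
          exact auxPsi_left hpq (hjlt j (Fin.lt_def.mpr hlt))
        rw [this]
      · have : h' (X j) = Y j := by
          rw [hh', Function.comp_apply]
          exact auxPsi_right hqr (hjgt j (Fin.lt_def.mpr hgt))
        rw [this]
  -- the perturbed element lies in `W ∩ C`, contradiction
  set hel : An k := ⟨h', hPL', hcard'⟩ with hhel
  have hmemC : hel ∈ interior C := by
    rw [← hWpre]
    show breakTuple k h' ∈ W
    rw [htuple']
    apply hδ
    rw [Metric.mem_ball, Real.dist_eq, sub_zero, abs_of_pos hε0]
    exact hεδ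
  have hCmem : hel ∈ C := interior_subset hmemC
  have : (breakTuple k h' i).2 = y := hCmem
  rw [htuple'] at this
  simp only [hc, if_pos rfl] at this
  rw [hyY] at this
  have : ε = 0 := by linarith [this]
  exact hε0.ne' this

lemma aux_closed (k : ℕ) (i : Fin k) (y : ℝ) :
    IsClosed {h : An k | (breakTuple k h.1 i).2 = y} := by
  have hPhi : Continuous (fun h : An k => breakTuple k h.1) := continuous_induced_dom
  have hcont : Continuous (fun h : An k => (breakTuple k h.1 i).2) :=
    Continuous.snd ((continuous_apply i).comp hPhi)
  exact isClosed_eq hcont continuous_const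

lemma aux_nwd' (k : ℕ) (i : Fin k) (y : ℝ) :
    IsNowhereDense {h : An k | (breakTuple k h.1 i).2 = y} := by
  rw [IsNowhereDense, (aux_closed k i y).closure_eq]
  exact aux_nwd k i y

lemma aux_exists_index {h : ℝ → ℝ} (hfin : (breakPts h).Finite) {k : ℕ}
    (hcard : (breakPts h).ncard = k) {x : ℝ} (hx : x ∈ breakPts h) :
    ∃ j : Fin k, breakTuple k h j = (x, h x) := by
  have hlen := aux_sort_length hfin hcard
  obtain ⟨n, hget⟩ := List.mem_iff_get.mp ((aux_mem_sort_iff hfin).mpr hx)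
  refine ⟨⟨n.1, hlen ▸ n.2⟩, ?_⟩
  rw [aux_breakTuple_spec hfin hlen]
  have hg : (hfin.toFinset.sort (· ≤ ·)).get
      (Fin.cast hlen.symm ⟨n.1, hlen ▸ n.2⟩) = x := by
    rw [← hget]; congr 1
  rw [hg]

end Aux

/-- Fix `n, m, k ∈ ℕ` with `k > m`, and `f ∈ PL₊(I)` with exactly `n`
break points.  In the Polish topology `τ₀` on `PL₊(I)`, the set `f·A_m ∩ A_k` is meager
in `A_k`. -/
theorem pl_not_polish_stmt14 (n m k : ℕ) (hk : k > m) (f : ℝ → ℝ)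
    (hf : IsPLHomeo f) (hfn : (breakPts f).ncard = n) :
    IsMeagre {h : An k | ∃ g : ℝ → ℝ, IsPLHomeo g ∧ (breakPts g).ncard = m ∧
      h.1 = f ∘ g} := by
  have hFfin : (f '' breakPts f).Finite := (aux_breakPts_finite hf).image f
  rw [isMeagre_iff_countable_union_isNowhereDense]
  refine ⟨(fun pr : Fin k × ℝ => {h : An k | (breakTuple k h.1 pr.1).2 = pr.2}) ''
      ((Set.univ : Set (Fin k)) ×ˢ (f '' breakPts f)), ?_, ?_, ?_⟩
  · rintro t ⟨⟨i, y⟩, -, rfl⟩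
    exact aux_nwd' k i y
  · exact ((Set.finite_univ.prod hFfin).countable).image _
  · rintro hh ⟨g, hgPL, hgcard, hcomp⟩
    -- find a break point of hh whose image under g is a break point of f
    have hhPL : IsPLHomeo hh.1 := hh.2.1
    have hhcard : (breakPts hh.1).ncard = k := hh.2.2
    have hhfin : (breakPts hh.1).Finite := aux_breakPts_finite hhPL
    have hsub : breakPts hh.1 ⊆
        breakPts g ∪ {x ∈ Set.Ioo (0:ℝ) 1 | g x ∈ breakPts f} := by
      rw [hcomp]
      exact aux_breakPts_comp hf hgPL
    have hnot : ¬ breakPts hh.1 ⊆ breakPts g := by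
      intro hcon
      have := Set.ncard_le_ncard hcon (aux_breakPts_finite hgPL)
      rw [hhcard, hgcard] at this
      omega
    obtain ⟨x, hx, hxg⟩ := Set.not_subset.mp hnot
    have hxT : g x ∈ breakPts f := by
      rcases hsub hx with hmem | hmem
      · exact absurd hmem hxg
      · exact hmem.2
    obtain ⟨j, hj⟩ := aux_exists_index hhfin hhcard hx
    refine ⟨{h : An k | (breakTuple k h.1 j).2 = f (g x)}, ⟨(j, f (g x)),
      ⟨Set.mem_univ j, ⟨g x, hxT, rfl⟩⟩, rfl⟩, ?_⟩
    show (breakTuple k hh.1 j).2 = f (g x)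
    rw [hj]
    show hh.1 x = f (g x)
    rw [hcomp]
    rfl
end
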